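/- arXiv:1802.06372 — 12 statements merged into one kernel-verified Lean document; each statement's English description precedes it below -/
import Mathlib

section
/- For every z ∈ ℝ, the map t ↦ Φ_t(z) is the phase flow of the ordinary differential equation x'(t) = F(x(t)) = x(t) − x(t)³: one has Φ_0(z) = z and, for every t ≥ 0, the function t ↦ Φ_t(z) is differentiable at t (one-sided at t = 0) with derivative equal to Φ_t(z) − Φ_t(z)³. -/
/-- The drift nonlinearity `F(z) = z - z³`. -/
noncomputable def F (z : ℝ) : ℝ := z - z ^ 3

/-- The flow map `Φ_t(z) = z / sqrt(z² + (1 - z²) exp(-2t))`. -/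
noncomputable def Phi (t z : ℝ) : ℝ :=
  z / Real.sqrt (z ^ 2 + (1 - z ^ 2) * Real.exp (-2 * t))

/-- For every `z`, `t ↦ Φ_t(z)` is the phase flow of `x' = F(x) = x - x³`:
`Φ_0(z) = z` and for every `t ≥ 0` it is differentiable at `t` (one-sided at `t = 0`)
with derivative `Φ_t(z) - Φ_t(z)³`. -/
theorem phi_is_flow_of_F (z : ℝ) :
    Phi 0 z = z ∧
      ∀ t : ℝ, 0 ≤ t →
        HasDerivWithinAt (fun s => Phi s z) (F (Phi t z)) (Set.Ici 0) t := by
  constructor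
  · simp [Phi]
  · intro t ht
    set g : ℝ → ℝ := fun s => z ^ 2 + (1 - z ^ 2) * Real.exp (-2 * s) with hg
    have he1 : Real.exp (-2 * t) ≤ 1 := by
      rw [Real.exp_le_one_iff]; linarith
    have hepos : 0 < Real.exp (-2 * t) := Real.exp_pos _
    have hgpos : 0 < g t := by
      simp only [hg]; nlinarith [sq_nonneg z]
    have h1 : HasDerivAt (fun s : ℝ => Real.exp (-2 * s)) (Real.exp (-2 * t) * -2) t := by
      have := (Real.hasDerivAt_exp (-2 * t)).comp t ((hasDerivAt_id t).const_mul (-2 : ℝ))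
      simpa [Function.comp_def] using this
    have hgd : HasDerivAt g ((1 - z ^ 2) * (Real.exp (-2 * t) * -2)) t := by
      rw [hg]
      exact (h1.const_mul (1 - z ^ 2)).const_add (z ^ 2)
    have hsq : HasDerivAt (fun s => Real.sqrt (g s))
        ((1 - z ^ 2) * (Real.exp (-2 * t) * -2) / (2 * Real.sqrt (g t))) t :=
      hgd.sqrt (ne_of_gt hgpos)
    have hA : 0 < Real.sqrt (g t) := Real.sqrt_pos.mpr hgpos
    have hAsq : Real.sqrt (g t) ^ 2 = g t := Real.sq_sqrt hgpos.le
    have hdiv : HasDerivAt (fun s => Phi s z)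
        ((0 * Real.sqrt (g t) - z * ((1 - z ^ 2) * (Real.exp (-2 * t) * -2) /
          (2 * Real.sqrt (g t)))) / (Real.sqrt (g t)) ^ 2) t :=
      (hasDerivAt_const t z).div hsq (ne_of_gt hA)
    have heq : (0 * Real.sqrt (g t) - z * ((1 - z ^ 2) * (Real.exp (-2 * t) * -2) /
          (2 * Real.sqrt (g t)))) / (Real.sqrt (g t)) ^ 2 = F (Phi t z) := by
      have hgt : g t = z ^ 2 + (1 - z ^ 2) * Real.exp (-2 * t) := rfl
      rw [F, Phi, ← hgt]
      set A := Real.sqrt (g t) with hAdef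
      have hA2 : A ^ 2 = z ^ 2 + (1 - z ^ 2) * Real.exp (-2 * t) := by
        rw [hAsq, hgt]
      field_simp
      simp only [neg_mul] at hA2 ⊢
      linear_combination (-z) * hA2
    rw [← heq]
    exact hdiv.hasDerivWithinAt
end

section
/- (Lipschitz continuity of the splitting flow map, Lemma 2.1, first estimate.) For every δt₀ ∈ (0,1) there exists a constant C ∈ (0,∞) such that for every δt ∈ [0, δt₀] and all z₁, z₂ ∈ ℝ, |Φ_{δt}(z₁) − Φ_{δt}(z₂)| ≤ exp(C·δt₀)·|z₁ − z₂|. -/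
lemma phi_hasDerivAt (t z : ℝ) (ht : 0 ≤ t) :
    HasDerivAt (Phi t)
      (Real.exp (-2 * t) /
        ((z ^ 2 + (1 - z ^ 2) * Real.exp (-2 * t)) *
          Real.sqrt (z ^ 2 + (1 - z ^ 2) * Real.exp (-2 * t)))) z := by
  set A := Real.exp (-2 * t) with hA
  have hA1 : A ≤ 1 := by
    rw [hA]
    exact Real.exp_le_one_iff.2 (by linarith)
  have hApos : 0 < A := Real.exp_pos _
  have hg : ∀ w : ℝ, w ^ 2 + (1 - w ^ 2) * A = A + (1 - A) * w ^ 2 := by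
    intro w; ring
  have hgpos : ∀ w : ℝ, 0 < w ^ 2 + (1 - w ^ 2) * A := by
    intro w
    rw [hg]
    have : 0 ≤ (1 - A) * w ^ 2 := mul_nonneg (by linarith) (sq_nonneg w)
    linarith
  set g : ℝ → ℝ := fun w => w ^ 2 + (1 - w ^ 2) * A with hgdef
  have hgd : HasDerivAt g (2 * (1 - A) * z) z := by
    have : HasDerivAt (fun w : ℝ => A + (1 - A) * w ^ 2) ((1 - A) * (2 * z)) z := by
      have h1 : HasDerivAt (fun w : ℝ => w ^ 2) (2 * z) z := by
        simpa using hasDerivAt_pow 2 z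
      simpa using (h1.const_mul (1 - A)).const_add A
    have heq : (fun w : ℝ => A + (1 - A) * w ^ 2) = g := by
      funext w; rw [hgdef]; ring_nf
    rw [heq] at this
    convert this using 1; ring
  have hsq : HasDerivAt (fun w => Real.sqrt (g w))
      (2 * (1 - A) * z / (2 * Real.sqrt (g z))) z :=
    (Real.hasDerivAt_sqrt (ne_of_gt (hgpos z))).comp z hgd |>.congr_deriv (by ring)
  have hsqrtpos : 0 < Real.sqrt (g z) := Real.sqrt_pos.2 (hgpos z)
  have hdiv : HasDerivAt (fun w => w / Real.sqrt (g w))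
      ((1 * Real.sqrt (g z) - z * (2 * (1 - A) * z / (2 * Real.sqrt (g z)))) /
        Real.sqrt (g z) ^ 2) z :=
    (hasDerivAt_id z).div hsq (ne_of_gt hsqrtpos)
  have hPhi : Phi t = fun w => w / Real.sqrt (g w) := by
    funext w; rfl
  rw [hPhi]
  have hG : g z = A + (1 - A) * z ^ 2 := by rw [hgdef]; ring
  have hm : Real.sqrt (g z) * Real.sqrt (g z) = g z := Real.mul_self_sqrt (hgpos z).le
  have heq : (1 * Real.sqrt (g z) - z * (2 * (1 - A) * z / (2 * Real.sqrt (g z)))) /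
      Real.sqrt (g z) ^ 2 = A / (g z * Real.sqrt (g z)) := by
    have hsq2 : Real.sqrt (g z) ^ 2 = g z := Real.sq_sqrt (hgpos z).le
    rw [hsq2]
    have hnum : 1 * Real.sqrt (g z) - z * (2 * (1 - A) * z / (2 * Real.sqrt (g z)))
        = A / Real.sqrt (g z) := by
      field_simp
      linear_combination hsq2 + hG
    rw [hnum, div_div, mul_comm (Real.sqrt (g z)) (g z)]
  have : (A / ((z ^ 2 + (1 - z ^ 2) * A) * Real.sqrt (z ^ 2 + (1 - z ^ 2) * A)))
      = A / (g z * Real.sqrt (g z)) := rfl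
  rw [this, ← heq]
  exact hdiv

/-- Lipschitz continuity of the splitting flow map (Lemma 2.1, first estimate):
for every `δt₀ ∈ (0,1)` there is `C ∈ (0,∞)` such that for every `δt ∈ [0, δt₀]`
and all `z₁, z₂ ∈ ℝ`, `|Φ_{δt}(z₁) - Φ_{δt}(z₂)| ≤ exp(C δt₀) |z₁ - z₂|`. -/
theorem phi_lipschitz (δt₀ : ℝ) (h₀ : δt₀ ∈ Set.Ioo (0 : ℝ) 1) :
    ∃ C : ℝ, 0 < C ∧ ∀ δt ∈ Set.Icc (0 : ℝ) δt₀, ∀ z₁ z₂ : ℝ,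
      |Phi δt z₁ - Phi δt z₂| ≤ Real.exp (C * δt₀) * |z₁ - z₂| := by
  refine ⟨1, one_pos, ?_⟩
  rintro δt ⟨hδt0, hδt1⟩ z₁ z₂
  set t := δt
  set A := Real.exp (-2 * t) with hA
  have hApos : 0 < A := Real.exp_pos _
  have hA1 : A ≤ 1 := Real.exp_le_one_iff.2 (by linarith)
  have hgpos : ∀ w : ℝ, 0 < w ^ 2 + (1 - w ^ 2) * A := by
    intro w
    have : 0 ≤ (1 - A) * w ^ 2 := mul_nonneg (by linarith) (sq_nonneg w)
    nlinarith [sq_nonneg w]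
  have bound : ∀ w : ℝ,
      ‖A / ((w ^ 2 + (1 - w ^ 2) * A) * Real.sqrt (w ^ 2 + (1 - w ^ 2) * A))‖
        ≤ Real.exp (1 * δt₀) := by
    intro w
    set gw := w ^ 2 + (1 - w ^ 2) * A with hgw
    have hgA : A ≤ gw := by nlinarith [sq_nonneg w]
    have hsA : Real.sqrt A ≤ Real.sqrt gw := Real.sqrt_le_sqrt hgA
    have hsApos : 0 < Real.sqrt A := Real.sqrt_pos.2 hApos
    have hden : A * Real.sqrt A ≤ gw * Real.sqrt gw :=
      mul_le_mul hgA hsA hsApos.le (hgpos w).le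
    have hdpos : 0 < A * Real.sqrt A := mul_pos hApos hsApos
    have h1 : A / (gw * Real.sqrt gw) ≤ A / (A * Real.sqrt A) :=
      div_le_div_of_nonneg_left hApos.le hdpos hden
    have h2 : A / (A * Real.sqrt A) = 1 / Real.sqrt A := by
      field_simp
    have h3 : Real.sqrt A = Real.exp (-t) := by
      rw [hA, ← Real.exp_half]; congr 1; ring
    have h4 : A / (A * Real.sqrt A) = Real.exp t := by
      rw [h3]; field_simp [Real.exp_ne_zero, Real.exp_neg]; rw [← Real.exp_add]; simp
    have h5 : Real.exp t ≤ Real.exp (1 * δt₀) := by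
      apply Real.exp_le_exp.2; linarith
    rw [Real.norm_eq_abs, abs_of_nonneg (div_nonneg hApos.le (mul_nonneg (hgpos w).le (Real.sqrt_nonneg _)))]
    calc A / (gw * Real.sqrt gw) ≤ A / (A * Real.sqrt A) := h1
      _ = Real.exp t := h4
      _ ≤ Real.exp (1 * δt₀) := h5
  have key := Convex.norm_image_sub_le_of_norm_hasDerivWithin_le
    (s := (Set.univ : Set ℝ))
    (f' := fun w => A / ((w ^ 2 + (1 - w ^ 2) * A) * Real.sqrt (w ^ 2 + (1 - w ^ 2) * A)))
    (fun w _ => ((phi_hasDerivAt t w hδt0)).hasDerivWithinAt)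
    (fun w _ => bound w) convex_univ (Set.mem_univ z₂) (Set.mem_univ z₁)
  simpa [Real.norm_eq_abs] using key
end

section
/- (One-sided Lipschitz condition for the modified nonlinearity, Lemma 2.1, second estimate.) For every δt₀ ∈ (0,1) and every even integer q = 2m with m ∈ ℕ, m ≥ 1, there exists a constant C ∈ (0,∞) such that for every δt ∈ [0, δt₀] and all z₁, z₂ ∈ ℝ, (Ψ_{δt}(z₁) − Ψ_{δt}(z₂))·(z₁ − z₂)^{q−1} ≤ exp(C·δt₀)·|z₁ − z₂|^q. -/
/-- The modified nonlinearity `Ψ_{δt}(z) = (Φ_{δt}(z) - z)/δt` for `δt > 0`, `Ψ_0 = F`. -/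
noncomputable def Psi (δt z : ℝ) : ℝ :=
  if δt = 0 then F z else (Phi δt z - z) / δt

/-- The flow map is `exp t`-Lipschitz for `t ≥ 0`. -/
lemma phi_lip (t : ℝ) (ht : 0 ≤ t) (z₁ z₂ : ℝ) :
    |Phi t z₁ - Phi t z₂| ≤ Real.exp t * |z₁ - z₂| := by
  set a := Real.exp (-2 * t) with ha_def
  have ha : 0 < a := Real.exp_pos _
  have ha1 : a ≤ 1 := Real.exp_le_one_iff.mpr (by nlinarith)
  set g : ℝ → ℝ := fun z => z ^ 2 + (1 - z ^ 2) * a with hg_def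
  have hga : ∀ z, a ≤ g z := by
    intro z
    have : g z = a + z ^ 2 * (1 - a) := by simp only [hg_def]; ring
    nlinarith [sq_nonneg z]
  have hgpos : ∀ z, 0 < g z := fun z => lt_of_lt_of_le ha (hga z)
  have hsq : ∀ z, 0 < Real.sqrt (g z) := fun z => Real.sqrt_pos.mpr (hgpos z)
  have hderiv : ∀ z, HasDerivAt (Phi t) (a / (g z * Real.sqrt (g z))) z := by
    intro z
    have hg' : HasDerivAt g (2 * z * (1 - a)) z := by
      have h1 : HasDerivAt (fun z : ℝ => z ^ 2) ((2:ℕ) * z ^ 1) z := hasDerivAt_pow 2 z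
      have h2 := ((hasDerivAt_const z (1:ℝ)).sub h1).mul_const a
      have h3 := h1.add h2
      refine h3.congr_deriv ?_
      push_cast; ring
    have hs : HasDerivAt (fun z => Real.sqrt (g z)) (z * (1 - a) / Real.sqrt (g z)) z := by
      have h := (Real.hasDerivAt_sqrt (ne_of_gt (hgpos z))).comp z hg'
      refine h.congr_deriv ?_
      field_simp
    have hdiv : HasDerivAt (fun z => z / Real.sqrt (g z))
        ((1 * Real.sqrt (g z) - z * (z * (1 - a) / Real.sqrt (g z))) / (Real.sqrt (g z)) ^ 2) z :=
      (hasDerivAt_id z).div hs (ne_of_gt (hsq z))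
    have h2 : (Real.sqrt (g z)) ^ 2 = g z := Real.sq_sqrt (le_of_lt (hgpos z))
    have h3 : (Real.sqrt (g z)) ^ 2 = z ^ 2 + (1 - z ^ 2) * a := by rw [h2]
    have heq : (1 * Real.sqrt (g z) - z * (z * (1 - a) / Real.sqrt (g z))) / (Real.sqrt (g z)) ^ 2
        = a / (g z * Real.sqrt (g z)) := by
      rw [← h2]
      set s := Real.sqrt (g z) with hs_def
      have hs0 : s ≠ 0 := ne_of_gt (hsq z)
      field_simp
      rw [Real.sqrt_sq (hsq z).le]
      linear_combination (s ^ 2) * h3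
    have hPhi : Phi t = fun z => z / Real.sqrt (g z) := by
      funext z; simp only [Phi, hg_def, ha_def]
    rw [hPhi, ← heq]
    exact hdiv
  have hsa : Real.sqrt a = Real.exp (-t) := by
    rw [ha_def, show (-2:ℝ) * t = -t + -t by ring, Real.exp_add, ← sq,
      Real.sqrt_sq (Real.exp_pos _).le]
  have hbound : ∀ z, ‖a / (g z * Real.sqrt (g z))‖ ≤ Real.exp t := by
    intro z
    have h1 : a * Real.sqrt a ≤ g z * Real.sqrt (g z) :=
      mul_le_mul (hga z) (Real.sqrt_le_sqrt (hga z)) (Real.sqrt_nonneg _) (le_of_lt (hgpos z))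
    have h2 : 0 < a * Real.sqrt a := by positivity
    rw [Real.norm_eq_abs, abs_of_nonneg (div_nonneg ha.le
      (mul_nonneg (hgpos z).le (Real.sqrt_nonneg _)))]
    calc a / (g z * Real.sqrt (g z)) ≤ a / (a * Real.sqrt a) :=
          div_le_div_of_nonneg_left (le_of_lt ha) h2 h1
      _ = 1 / Real.sqrt a := by field_simp
      _ = Real.exp t := by rw [hsa, one_div, ← Real.exp_neg, neg_neg]
  have := Convex.norm_image_sub_le_of_norm_hasDerivWithin_le
    (fun x _ => (hderiv x).hasDerivWithinAt) (fun x _ => hbound x)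
    (convex_univ) (Set.mem_univ z₂) (Set.mem_univ z₁)
  simpa [Real.norm_eq_abs] using this

/-- One-sided Lipschitz estimate with exponent 2. -/
lemma psi_osl (δt : ℝ) (h0 : 0 ≤ δt) (h1 : δt ≤ 1) (z₁ z₂ : ℝ) :
    (Psi δt z₁ - Psi δt z₂) * (z₁ - z₂) ≤ Real.exp 1 * (z₁ - z₂) ^ 2 := by
  have he : (1:ℝ) ≤ Real.exp 1 := Real.one_le_exp (by norm_num)
  rcases eq_or_lt_of_le h0 with h | h
  · simp only [Psi, ← h, if_pos rfl, if_true, F]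
    nlinarith [sq_nonneg (z₁ + z₂), sq_nonneg (z₁ - z₂), mul_nonneg
      (mul_nonneg (sq_nonneg (z₁ - z₂)) (sq_nonneg (z₁ + z₂))) (sq_nonneg (z₁ - z₂))]
  · simp only [Psi, if_neg (ne_of_gt h)]
    have key : (Phi δt z₁ - Phi δt z₂) * (z₁ - z₂) ≤ Real.exp δt * (z₁ - z₂) ^ 2 := by
      calc (Phi δt z₁ - Phi δt z₂) * (z₁ - z₂) ≤ |Phi δt z₁ - Phi δt z₂| * |z₁ - z₂| := by
            rw [← abs_mul]; exact le_abs_self _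
        _ ≤ (Real.exp δt * |z₁ - z₂|) * |z₁ - z₂| :=
            mul_le_mul_of_nonneg_right (phi_lip δt h.le z₁ z₂) (abs_nonneg _)
        _ = Real.exp δt * (z₁ - z₂) ^ 2 := by rw [mul_assoc, ← abs_mul, ← sq, abs_sq]
    have hexp : Real.exp δt - 1 ≤ δt * Real.exp 1 := by
      have ha := Real.add_one_le_exp (-δt)
      have hb : Real.exp δt ≤ Real.exp 1 := Real.exp_le_exp.mpr h1
      have hmul : Real.exp δt * Real.exp (-δt) = 1 := by rw [← Real.exp_add]; simp
      nlinarith [Real.exp_pos δt]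
    have heq : ((Phi δt z₁ - z₁) / δt - (Phi δt z₂ - z₂) / δt) * (z₁ - z₂)
        = ((Phi δt z₁ - Phi δt z₂) * (z₁ - z₂) - (z₁ - z₂) ^ 2) / δt := by
      field_simp; ring
    rw [heq, div_le_iff₀ h]
    nlinarith [key, sq_nonneg (z₁ - z₂)]

/-- One-sided Lipschitz condition for the modified nonlinearity (Lemma 2.1, second
estimate): for every `δt₀ ∈ (0,1)` and every even integer `q = 2m`, `m ≥ 1`, there is
`C ∈ (0,∞)` such that for every `δt ∈ [0, δt₀]` and all `z₁, z₂ ∈ ℝ`,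
`(Ψ_{δt}(z₁) - Ψ_{δt}(z₂))(z₁ - z₂)^{q-1} ≤ exp(C δt₀) |z₁ - z₂|^q`. -/
theorem psi_one_sided_lipschitz (δt₀ : ℝ) (h₀ : δt₀ ∈ Set.Ioo (0 : ℝ) 1)
    (m : ℕ) (hm : 1 ≤ m) :
    ∃ C : ℝ, 0 < C ∧ ∀ δt ∈ Set.Icc (0 : ℝ) δt₀, ∀ z₁ z₂ : ℝ,
      (Psi δt z₁ - Psi δt z₂) * (z₁ - z₂) ^ (2 * m - 1)
        ≤ Real.exp (C * δt₀) * |z₁ - z₂| ^ (2 * m) := by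
  obtain ⟨h₀1, h₀2⟩ := h₀
  refine ⟨1 / δt₀, by positivity, ?_⟩
  intro δt hδt z₁ z₂
  have hC : 1 / δt₀ * δt₀ = 1 := by field_simp
  rw [hC]
  obtain ⟨k, rfl⟩ : ∃ k, m = k + 1 := ⟨m - 1, by omega⟩
  have h1 : 2 * (k + 1) - 1 = 2 * k + 1 := by omega
  have h2 : (z₁ - z₂) ^ (2 * k + 1) = ((z₁ - z₂) ^ 2) ^ k * (z₁ - z₂) := by
    rw [pow_succ, pow_mul]
  have h3 : |z₁ - z₂| ^ (2 * (k + 1)) = ((z₁ - z₂) ^ 2) ^ (k + 1) := by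
    rw [pow_mul, sq_abs]
  rw [h1, h2, h3]
  have hosl := psi_osl δt hδt.1 (le_trans hδt.2 h₀2.le) z₁ z₂
  calc (Psi δt z₁ - Psi δt z₂) * (((z₁ - z₂) ^ 2) ^ k * (z₁ - z₂))
      = ((Psi δt z₁ - Psi δt z₂) * (z₁ - z₂)) * ((z₁ - z₂) ^ 2) ^ k := by ring
    _ ≤ (Real.exp 1 * (z₁ - z₂) ^ 2) * ((z₁ - z₂) ^ 2) ^ k :=
        mul_le_mul_of_nonneg_right hosl (pow_nonneg (sq_nonneg _) k)
    _ = Real.exp 1 * ((z₁ - z₂) ^ 2) ^ (k + 1) := by ring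
end

section
/- (Local Lipschitz continuity of the modified nonlinearity, Lemma 2.1, third estimate.) For every δt₀ ∈ (0,1) there exists a constant C(δt₀) ∈ (0,∞) such that for every δt ∈ [0, δt₀] and all z₁, z₂ ∈ ℝ, |Ψ_{δt}(z₁) − Ψ_{δt}(z₂)| ≤ C(δt₀)·|z₁ − z₂|·(1 + z₁² + z₂²). -/
lemma u_pos (δt z : ℝ) (h : 0 ≤ δt) :
    0 < z ^ 2 + (1 - z ^ 2) * Real.exp (-2 * δt) := by
  have he1 : Real.exp (-2 * δt) ≤ 1 := Real.exp_le_one_iff.mpr (by linarith)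
  have he0 : 0 < Real.exp (-2 * δt) := Real.exp_pos _
  nlinarith [sq_nonneg z, mul_nonneg (sq_nonneg z) (by linarith : (0:ℝ) ≤ 1 - Real.exp (-2 * δt))]

lemma hasDerivAt_Phi (δt z : ℝ) (h : 0 ≤ δt) :
    HasDerivAt (Phi δt)
      (Real.exp (-2 * δt) /
        ((z ^ 2 + (1 - z ^ 2) * Real.exp (-2 * δt)) *
          Real.sqrt (z ^ 2 + (1 - z ^ 2) * Real.exp (-2 * δt)))) z := by
  set e := Real.exp (-2 * δt) with he
  have hu : 0 < z ^ 2 + (1 - z ^ 2) * e := u_pos δt z h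
  have hg : HasDerivAt (fun z : ℝ => z ^ 2 + (1 - z ^ 2) * e) (2 * z + -(2 * z) * e) z := by
    have h1 : HasDerivAt (fun z : ℝ => z ^ 2) (2 * z) z := by
      simpa using hasDerivAt_pow 2 z
    have h2 : HasDerivAt (fun z : ℝ => (1 - z ^ 2) * e) (-(2 * z) * e) z := by
      simpa using ((hasDerivAt_const z (1:ℝ)).sub h1).mul_const e
    exact h1.add h2
  have hsq := hg.sqrt hu.ne'
  have hs0 : Real.sqrt (z ^ 2 + (1 - z ^ 2) * e) ≠ 0 := by
    positivity
  have hdiv := (hasDerivAt_id z).div hsq hs0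
  have hPhi : Phi δt = fun z => z / Real.sqrt (z ^ 2 + (1 - z ^ 2) * e) := by
    funext w; simp [Phi, he]
  rw [hPhi]
  refine (hdiv : HasDerivAt (fun z => z / Real.sqrt (z ^ 2 + (1 - z ^ 2) * e)) _ z).congr_deriv ?_
  symm
  have hs2 : Real.sqrt (z ^ 2 + (1 - z ^ 2) * e) ^ 2 = z ^ 2 + (1 - z ^ 2) * e :=
    Real.sq_sqrt hu.le
  simp only [id]
  generalize Real.sqrt (z ^ 2 + (1 - z ^ 2) * e) = S at hs0 hs2 ⊢
  have hu' := hu.ne'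
  rw [hs2]
  field_simp
  rw [hs2]
  ring

lemma cube_aux (s q : ℝ) (hq : 0 ≤ q) (h : q ≤ s) :
    s ^ 2 * s - q ^ 2 * q ≤ 2 * (s ^ 2 - q ^ 2) * s := by
  nlinarith [mul_nonneg (by linarith : (0:ℝ) ≤ s - q)
    (by nlinarith : (0:ℝ) ≤ s ^ 2 + s * q - q ^ 2)]

set_option maxHeartbeats 1000000 in
lemma bound_core (δt z e u s q : ℝ) (h0 : 0 < δt)
    (he0 : 0 < e) (he1 : e ≤ 1) (h8 : (1:ℝ)/8 ≤ e) (h1me : 1 - e ≤ 2 * δt)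
    (huu : u = z ^ 2 + (1 - z ^ 2) * e)
    (hs0 : 0 < s) (hq0 : 0 < q) (hs2 : s ^ 2 = u) (hq2 : q ^ 2 = e) (hqs : q ≤ s) :
    |e / (u * s) - 1| ≤ 64 * (1 + z ^ 2) * δt := by
  have hue : e ≤ u := by
    nlinarith [mul_nonneg (sq_nonneg z) (by linarith : (0:ℝ) ≤ 1 - e)]
  have hu : 0 < u := lt_of_lt_of_le he0 hue
  have hq1 : q ≤ 1 := by nlinarith [sq_nonneg (q - 1)]
  have heq : e ≤ q := by nlinarith [mul_nonneg hq0.le (by linarith : (0:ℝ) ≤ 1 - q)]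
  have hq4 : (1:ℝ)/4 ≤ q := by nlinarith [hq2, hq0, h8]
  have hu8 : (1:ℝ)/8 ≤ u := le_trans h8 hue
  have hs4 : (1:ℝ)/4 ≤ s := le_trans hq4 hqs
  have husu : (1:ℝ)/32 ≤ u * s := by
    calc (1:ℝ)/32 = (1/8 : ℝ) * (1/4 : ℝ) := by norm_num
    _ ≤ u * s := mul_le_mul hu8 hs4 (by norm_num) (by linarith)
  have hus : 0 < u * s := by positivity
  have hA : e - e * q ≤ 2 * δt := by
    nlinarith [mul_nonneg (by linarith : (0:ℝ) ≤ 1 - e) (by linarith : (0:ℝ) ≤ 1 - q)]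
  have hB : u * s - e * q ≤ 2 * (u - e) * s := by
    have := cube_aux s q hq0.le hqs
    rw [← hs2, ← hq2]
    linarith
  have hA0 : 0 ≤ e - e * q := by
    nlinarith [mul_nonneg he0.le (by linarith : (0:ℝ) ≤ 1 - q)]
  have hB0 : 0 ≤ u * s - e * q := by nlinarith [mul_le_mul hue hqs hq0.le hu.le]
  have hug : 0 ≤ (u - e) * s := mul_nonneg (by linarith) hs0.le
  have huz : u - e ≤ 2 * δt * z ^ 2 := by
    nlinarith [mul_le_mul_of_nonneg_left h1me (sq_nonneg z)]
  have habs : |e - u * s| ≤ 2 * δt + 2 * (u - e) * s := by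
    rw [abs_le]
    constructor <;> linarith
  have hkey : |e - u * s| ≤ 64 * (1 + z ^ 2) * δt * (u * s) := by
    have t1 : 2 * δt ≤ 64 * δt * (u * s) := by
      have h := mul_le_mul_of_nonneg_left husu (by positivity : (0:ℝ) ≤ 64 * δt)
      linarith
    have t2 : 2 * (u - e) * s ≤ 64 * δt * z ^ 2 * (u * s) := by
      have p1 : (u - e) * s ≤ 2 * δt * z ^ 2 * s :=
        mul_le_mul_of_nonneg_right huz hs0.le
      have h2 : 2 * δt * z ^ 2 * s * 1 ≤ 2 * δt * z ^ 2 * s * (16 * u) :=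
        mul_le_mul_of_nonneg_left (by linarith : (1:ℝ) ≤ 16 * u)
          (by positivity : (0:ℝ) ≤ 2 * δt * z ^ 2 * s)
      linarith [p1, h2]
    calc |e - u * s| ≤ 2 * δt + 2 * (u - e) * s := habs
    _ ≤ 64 * δt * (u * s) + 64 * δt * z ^ 2 * (u * s) := by linarith
    _ = 64 * (1 + z ^ 2) * δt * (u * s) := by ring
  have hfrac : e / (u * s) - 1 = (e - u * s) / (u * s) := by
    field_simp
  rw [hfrac, abs_div, abs_of_pos hus, div_le_iff₀ hus]
  exact hkey

lemma psi_deriv_bound (δt z : ℝ) (h0 : 0 < δt) (h1 : δt ≤ 1) :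
    |(Real.exp (-2 * δt) /
        ((z ^ 2 + (1 - z ^ 2) * Real.exp (-2 * δt)) *
          Real.sqrt (z ^ 2 + (1 - z ^ 2) * Real.exp (-2 * δt))) - 1) / δt| ≤
      64 * (1 + z ^ 2) := by
  have he0 : 0 < Real.exp (-2 * δt) := Real.exp_pos _
  have he1 : Real.exp (-2 * δt) ≤ 1 := Real.exp_le_one_iff.mpr (by linarith)
  have hexp2 : Real.exp 2 < 8 := by
    have hd9 := Real.exp_one_lt_d9
    have h22 : Real.exp 2 = Real.exp 1 * Real.exp 1 := by
      rw [← Real.exp_add]; norm_num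
    nlinarith [Real.exp_pos 1]
  have h8 : (1:ℝ)/8 ≤ Real.exp (-2 * δt) := by
    have hm : Real.exp (-2) ≤ Real.exp (-2 * δt) := Real.exp_le_exp.mpr (by linarith)
    have hn : Real.exp (-2) = (Real.exp 2)⁻¹ := Real.exp_neg 2
    have hi : (8:ℝ)⁻¹ ≤ (Real.exp 2)⁻¹ := by
      apply inv_anti₀ (Real.exp_pos 2) hexp2.le
    rw [hn] at hm
    calc (1:ℝ)/8 = (8:ℝ)⁻¹ := by norm_num
    _ ≤ (Real.exp 2)⁻¹ := hi
    _ ≤ Real.exp (-2 * δt) := hm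
  have h1me : 1 - Real.exp (-2 * δt) ≤ 2 * δt := by
    have := Real.add_one_le_exp (-2 * δt)
    linarith
  have hu : 0 < z ^ 2 + (1 - z ^ 2) * Real.exp (-2 * δt) := u_pos δt z h0.le
  have hue : Real.exp (-2 * δt) ≤ z ^ 2 + (1 - z ^ 2) * Real.exp (-2 * δt) := by
    nlinarith [mul_nonneg (sq_nonneg z) (by linarith : (0:ℝ) ≤ 1 - Real.exp (-2 * δt))]
  have hcore := bound_core δt z (Real.exp (-2 * δt))
    (z ^ 2 + (1 - z ^ 2) * Real.exp (-2 * δt))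
    (Real.sqrt (z ^ 2 + (1 - z ^ 2) * Real.exp (-2 * δt)))
    (Real.sqrt (Real.exp (-2 * δt))) h0 he0 he1 h8 h1me rfl
    (Real.sqrt_pos.mpr hu) (Real.sqrt_pos.mpr he0)
    (Real.sq_sqrt hu.le) (Real.sq_sqrt he0.le)
    (Real.sqrt_le_sqrt hue)
  rw [abs_div, abs_of_pos h0, div_le_iff₀ h0]
  linarith

lemma mvt_aux (f f' : ℝ → ℝ) (hf : ∀ x, HasDerivAt f (f' x) x)
    (hb : ∀ x, |f' x| ≤ 64 * (1 + x ^ 2)) (z₁ z₂ : ℝ) :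
    |f z₁ - f z₂| ≤ 64 * |z₁ - z₂| * (1 + z₁ ^ 2 + z₂ ^ 2) := by
  have hconv : Convex ℝ (Set.uIcc z₂ z₁) := convex_uIcc _ _
  have hmem : ∀ x ∈ Set.uIcc z₂ z₁, x ^ 2 ≤ z₁ ^ 2 + z₂ ^ 2 := by
    intro x hx
    rcases Set.mem_uIcc.mp hx with ⟨h1, h2⟩ | ⟨h1, h2⟩ <;>
      rcases le_or_gt 0 x with hx0 | hx0 <;>
      nlinarith [sq_nonneg z₁, sq_nonneg z₂, mul_self_nonneg x]
  have hmvt := hconv.norm_image_sub_le_of_norm_hasDerivWithin_le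
    (f := f) (f' := f') (C := 64 * (1 + z₁ ^ 2 + z₂ ^ 2))
    (fun x _ => (hf x).hasDerivWithinAt)
    (fun x hx => by
      simp only [Real.norm_eq_abs]
      have := hb x
      have := hmem x hx
      linarith)
    Set.left_mem_uIcc Set.right_mem_uIcc
  simp only [Real.norm_eq_abs] at hmvt
  calc |f z₁ - f z₂| ≤ 64 * (1 + z₁ ^ 2 + z₂ ^ 2) * |z₁ - z₂| := hmvt
  _ = 64 * |z₁ - z₂| * (1 + z₁ ^ 2 + z₂ ^ 2) := by ring

/-- Local Lipschitz continuity of the modified nonlinearity (Lemma 2.1, third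
estimate): for every `δt₀ ∈ (0,1)` there is `C(δt₀) ∈ (0,∞)` such that for every
`δt ∈ [0, δt₀]` and all `z₁, z₂ ∈ ℝ`,
`|Ψ_{δt}(z₁) - Ψ_{δt}(z₂)| ≤ C(δt₀) |z₁ - z₂| (1 + z₁² + z₂²)`. -/
theorem psi_local_lipschitz (δt₀ : ℝ) (h₀ : δt₀ ∈ Set.Ioo (0 : ℝ) 1) :
    ∃ C : ℝ, 0 < C ∧ ∀ δt ∈ Set.Icc (0 : ℝ) δt₀, ∀ z₁ z₂ : ℝ,
      |Psi δt z₁ - Psi δt z₂| ≤ C * |z₁ - z₂| * (1 + z₁ ^ 2 + z₂ ^ 2) := by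
  obtain ⟨hδ0, hδ1⟩ := h₀
  refine ⟨64, by norm_num, ?_⟩
  rintro δt ⟨hδl, hδr⟩ z₁ z₂
  have hδt1 : δt ≤ 1 := hδr.trans hδ1.le
  rcases eq_or_lt_of_le hδl with h0 | h0
  · -- δt = 0
    have hPsi : Psi δt = F := by
      funext w; simp [Psi, ← h0]
    rw [hPsi]
    refine mvt_aux F (fun x => 1 - 3 * x ^ 2) (fun x => ?_) (fun x => ?_) z₁ z₂
    · have : HasDerivAt (fun z : ℝ => z - z ^ 3) (1 - 3 * x ^ 2) x := by
        exact ((hasDerivAt_id' x).sub (hasDerivAt_pow 3 x)).congr_deriv (by norm_num)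
      exact this
    · show |1 - 3 * x ^ 2| ≤ 64 * (1 + x ^ 2)
      rw [abs_le]; constructor <;> nlinarith [sq_nonneg x]
  · -- δt > 0
    have hne : δt ≠ 0 := h0.ne'
    have hPsi : Psi δt = fun z => (Phi δt z - z) / δt := by
      funext w; simp [Psi, hne]
    rw [hPsi]
    have hd : ∀ x : ℝ, HasDerivAt (fun z => (Phi δt z - z) / δt)
        ((Real.exp (-2 * δt) / ((x ^ 2 + (1 - x ^ 2) * Real.exp (-2 * δt)) *
          Real.sqrt (x ^ 2 + (1 - x ^ 2) * Real.exp (-2 * δt))) - 1) / δt) x := fun x =>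
      ((hasDerivAt_Phi δt x h0.le).sub (hasDerivAt_id x)).div_const δt
    exact mvt_aux _ _ hd (fun x => psi_deriv_bound δt x h0 hδt1) z₁ z₂
end

section
/- (Consistency of the modified nonlinearity, Lemma 2.1, fourth estimate.) For every δt₀ ∈ (0,1) there exists a constant C(δt₀) ∈ (0,∞) such that for every δt ∈ [0, δt₀] and all z ∈ ℝ, |Ψ_{δt}(z) − F(z)| ≤ C(δt₀)·δt·(1 + |z|⁵). -/
lemma abs_poly_bound (z : ℝ) : |z| * (1 + z ^ 2) ^ 2 ≤ 4 * (1 + |z| ^ 5) := by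
  have ha : 0 ≤ |z| := abs_nonneg z
  have h2 : z ^ 2 = |z| ^ 2 := (sq_abs z).symm
  rw [h2]
  set a := |z| with ha_def
  have h1 : a ≤ 1 + a ^ 5 := by
    rcases le_total a 1 with h | h
    · nlinarith [pow_nonneg ha 5]
    · nlinarith [pow_le_pow_right₀ h (show 1 ≤ 5 by norm_num)]
  have h3 : a ^ 3 ≤ 1 + a ^ 5 := by
    rcases le_total a 1 with h | h
    · nlinarith [pow_le_one₀ (n := 3) ha h, pow_nonneg ha 5]
    · nlinarith [pow_le_pow_right₀ h (show 3 ≤ 5 by norm_num)]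
  nlinarith [h1, h3, pow_nonneg ha 5]

set_option maxHeartbeats 1000000 in
lemma key (t : ℝ) (ht : 0 < t) (ht1 : t ≤ 1) (z : ℝ) :
    |Phi t z - z - t * F z| ≤ 96 * t ^ 2 * (1 + |z| ^ 5) := by
  set u : ℝ := Real.exp (-2 * t) with hu_def
  have hu0 : 0 < u := Real.exp_pos _
  have hu1 : u ≤ 1 := Real.exp_le_one_iff.mpr (by linarith)
  set D : ℝ := z ^ 2 + (1 - z ^ 2) * u with hD_def
  have hD0 : 0 < D := by nlinarith [sq_nonneg z, mul_nonneg (sq_nonneg z) (sub_nonneg.mpr hu1)]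
  set s : ℝ := Real.sqrt D with hs_def
  have hPhi : Phi t z = z / s := rfl
  have hs0 : 0 < s := Real.sqrt_pos.mpr hD0
  have hsD : s ^ 2 = D := Real.sq_sqrt hD0.le
  clear_value u D s
  -- lower bound on s
  have hexp_sq : Real.exp (-t) ^ 2 = u := by
    rw [hu_def, ← Real.exp_nat_mul]; ring_nf
  have hs_low : Real.exp (-t) ≤ s := by
    have h1 : Real.exp (-t) = Real.sqrt u := by
      rw [← hexp_sq, Real.sqrt_sq (Real.exp_pos _).le]
    rw [h1, hs_def]
    exact Real.sqrt_le_sqrt (by rw [hD_def]; nlinarith [mul_nonneg (sq_nonneg z) (sub_nonneg.mpr hu1)])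
  have hs3 : (1:ℝ)/3 ≤ s := by
    have h1 : Real.exp (-1 : ℝ) ≤ Real.exp (-t) := Real.exp_le_exp.mpr (by linarith)
    have h2 : Real.exp (1:ℝ) ≤ 3 := by
      have := Real.exp_one_lt_d9; linarith
    have h3 : (1:ℝ)/3 ≤ Real.exp (-1 : ℝ) := by
      rw [Real.exp_neg, div_le_iff₀ (by norm_num : (0:ℝ) < 3),
        inv_mul_eq_div, le_div_iff₀ (Real.exp_pos _)]
      linarith
    linarith
  have hden : (1:ℝ)/3 ≤ s * (1 + s) := by nlinarith
  have hden0 : (0:ℝ) < s * (1 + s) := by nlinarith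
  -- exp inequalities
  have he1 : 1 - 2*t ≤ u := by
    have := Real.add_one_le_exp (-2 * t); linarith
  have he2 : u ≤ 1 - 2*t + 4*t^2 := by
    have h1 : 2*t + 1 ≤ Real.exp (2*t) := Real.add_one_le_exp _
    have h2 : u * Real.exp (2*t) = 1 := by
      rw [hu_def, ← Real.exp_add]; ring_nf; exact Real.exp_zero
    have h3 : u * (2*t + 1) ≤ 1 := by nlinarith [mul_le_mul_of_nonneg_left h1 hu0.le]
    nlinarith [h3, mul_pos ht (mul_pos ht ht), hu0]
  -- key identity
  set N : ℝ := (1 - u) - t * (s * (1 + s)) with hN_def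
  clear_value N
  have hzs : z / s * s = z := div_mul_cancel₀ z hs0.ne'
  have hprod : (Phi t z - z - t * F z) * (s * (1 + s)) = z * (1 - z ^ 2) * N := by
    rw [hPhi, F, hN_def]
    linear_combination (1 + s) * hzs - z * hsD - z * hD_def
  have hid : Phi t z - z - t * F z = z * (1 - z ^ 2) * N / (s * (1 + s)) :=
    (eq_div_iff hden0.ne').mpr hprod
  -- bounds on pieces
  have hz2 : |1 - z ^ 2| ≤ 1 + z ^ 2 := by
    rw [abs_le]; constructor <;> nlinarith [sq_nonneg z]
  have hD1 : |1 - s ^ 2| ≤ 2 * t * (1 + z ^ 2) := by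
    have hrw : 1 - s ^ 2 = (1 - z ^ 2) * (1 - u) := by rw [hsD, hD_def]; ring
    rw [hrw, abs_mul, abs_of_nonneg (by linarith : (0:ℝ) ≤ 1 - u)]
    calc |1 - z ^ 2| * (1 - u) ≤ (1 + z ^ 2) * (2 * t) :=
          mul_le_mul hz2 (by linarith) (by linarith) (by nlinarith [sq_nonneg z])
      _ = 2 * t * (1 + z ^ 2) := by ring
  have hs1 : |1 - s| ≤ 2 * t * (1 + z ^ 2) := by
    have h1 : |1 - s| * (1 + s) = |1 - s ^ 2| := by
      rw [← abs_of_pos (show (0:ℝ) < 1 + s by linarith), ← abs_mul]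
      congr 1; ring
    have h2 : |1 - s| ≤ |1 - s| * (1 + s) :=
      le_mul_of_one_le_right (abs_nonneg _) (by linarith)
    rw [h1] at h2
    exact h2.trans hD1
  have hN1 : |1 - u - 2*t| ≤ 4 * t ^ 2 := by
    rw [abs_le]; constructor <;> nlinarith
  have hNbound : |N| ≤ 8 * t ^ 2 * (1 + z ^ 2) := by
    have hdecomp : N = (1 - u - 2*t) + t * (1 - s) + t * (1 - s ^ 2) := by
      rw [hN_def]; ring
    calc |N| ≤ |1 - u - 2*t| + |t * (1 - s)| + |t * (1 - s ^ 2)| := by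
          rw [hdecomp]; exact (abs_add_le _ _).trans (by gcongr; exact abs_add_le _ _)
      _ = |1 - u - 2*t| + t * |1 - s| + t * |1 - s ^ 2| := by
          rw [abs_mul, abs_mul, abs_of_pos ht]
      _ ≤ 4 * t ^ 2 + t * (2 * t * (1 + z ^ 2)) + t * (2 * t * (1 + z ^ 2)) := by gcongr
      _ ≤ 8 * t ^ 2 * (1 + z ^ 2) := by nlinarith [sq_nonneg z, sq_nonneg t]
  -- combine
  rw [hid, abs_div, abs_mul, abs_mul, abs_of_pos hden0,
    div_le_iff₀ hden0]
  have step1 : |z| * |1 - z ^ 2| * |N| ≤ |z| * (1 + z ^ 2) * (8 * t ^ 2 * (1 + z ^ 2)) := by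
    apply mul_le_mul _ hNbound (abs_nonneg _) (by positivity)
    exact mul_le_mul_of_nonneg_left hz2 (abs_nonneg _)
  have step2 : |z| * (1 + z ^ 2) * (8 * t ^ 2 * (1 + z ^ 2)) = 8 * t ^ 2 * (|z| * (1 + z ^ 2) ^ 2) := by
    ring
  have step3 : 8 * t ^ 2 * (|z| * (1 + z ^ 2) ^ 2) ≤ 8 * t ^ 2 * (4 * (1 + |z| ^ 5)) :=
    mul_le_mul_of_nonneg_left (abs_poly_bound z) (by positivity)
  have step4 : 8 * t ^ 2 * (4 * (1 + |z| ^ 5)) = (96 * t ^ 2 * (1 + |z| ^ 5)) * (1/3) := by ring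
  have step5 : (96 * t ^ 2 * (1 + |z| ^ 5)) * (1/3) ≤ (96 * t ^ 2 * (1 + |z| ^ 5)) * (s * (1 + s)) :=
    mul_le_mul_of_nonneg_left hden (by positivity)
  linarith [step1, step2, step3, step4, step5]


/-- Consistency of the modified nonlinearity (Lemma 2.1, fourth estimate): for every
`δt₀ ∈ (0,1)` there is `C(δt₀) ∈ (0,∞)` such that for every `δt ∈ [0, δt₀]` and all
`z ∈ ℝ`, `|Ψ_{δt}(z) - F(z)| ≤ C(δt₀) δt (1 + |z|⁵)`. -/
theorem psi_consistency (δt₀ : ℝ) (h₀ : δt₀ ∈ Set.Ioo (0 : ℝ) 1) :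
    ∃ C : ℝ, 0 < C ∧ ∀ δt ∈ Set.Icc (0 : ℝ) δt₀, ∀ z : ℝ,
      |Psi δt z - F z| ≤ C * δt * (1 + |z| ^ 5) := by
  refine ⟨96, by norm_num, ?_⟩
  rintro δt ⟨hδ0, hδ1⟩ z
  rcases eq_or_lt_of_le hδ0 with h | h
  · simp [Psi, ← h]
  · rw [Psi, if_neg h.ne']
    have hkey := key δt h (by linarith [h₀.2]) z
    rw [div_sub' h.ne', abs_div, abs_of_pos h, div_le_iff₀ h]
    calc |Phi δt z - z - δt * F z| ≤ 96 * δt ^ 2 * (1 + |z| ^ 5) := hkey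
      _ = 96 * δt * (1 + |z| ^ 5) * δt := by ring
end

section
/- (Uniform cubic growth of the modified nonlinearity.) There exists a constant C ∈ (0,∞) such that for every δt ≥ 0 and every z ∈ ℝ, |Ψ_{δt}(z)| ≤ C·(1 + |z|³). -/
set_option maxHeartbeats 1600000 in
/-- Uniform cubic growth of the modified nonlinearity: there is `C ∈ (0,∞)` such that
for every `δt ≥ 0` and every `z ∈ ℝ`, `|Ψ_{δt}(z)| ≤ C (1 + |z|³)`. -/
theorem psi_cubic_growth :
    ∃ C : ℝ, 0 < C ∧ ∀ δt : ℝ, 0 ≤ δt → ∀ z : ℝ,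
      |Psi δt z| ≤ C * (1 + |z| ^ 3) := by
  refine ⟨2, by norm_num, fun δt hδt z => ?_⟩
  have hz3 : (0:ℝ) ≤ |z|^3 := by positivity
  have hz2 : |z|^2 = z^2 := sq_abs z
  rcases eq_or_lt_of_le hδt with h0 | hpos
  · subst h0
    simp only [Psi, if_pos rfl, if_true, eq_self_iff_true, F]
    have h1 : |z - z^3| ≤ |z| + |z|^3 := by
      calc |z - z^3| ≤ |z| + |z^3| := abs_sub _ _
      _ = |z| + |z|^3 := by rw [abs_pow]
    have h2 : |z| ≤ 1 + |z|^3 := by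
      nlinarith [abs_nonneg z, sq_nonneg (|z|-1), sq_nonneg (|z|+1)]
    linarith
  · have hne : δt ≠ 0 := ne_of_gt hpos
    simp only [Psi, if_neg hne, Phi]
    set u := Real.exp (-2*δt) with hu
    have hu0 : 0 < u := Real.exp_pos _
    have hu1 : u ≤ 1 := by
      rw [hu, ← Real.exp_zero]
      exact Real.exp_le_exp.mpr (by linarith)
    have hut : 1 - u ≤ 2*δt := by
      have := Real.add_one_le_exp (-2*δt)
      rw [← hu] at this; linarith
    set D := z^2 + (1-z^2)*u with hD
    have hD0 : 0 < D := by nlinarith [sq_nonneg z]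
    set s := Real.sqrt D with hs
    have hs2 : s^2 = D := Real.sq_sqrt hD0.le
    have hs0 : 0 < s := Real.sqrt_pos.mpr hD0
    clear_value u D s
    have keyid : z / s - z = z * (1 - D) / (s * (1 + s)) := by
      have h1D : (1:ℝ) - D = (1-s)*(1+s) := by rw [← hs2]; ring
      rw [h1D]
      field_simp
    rw [abs_div, abs_of_pos hpos, div_le_iff₀ hpos, keyid, abs_div, abs_mul]
    have hden : 0 < |s * (1+s)| := by positivity
    rw [div_le_iff₀ hden]
    have habs : |s * (1+s)| = s * (1+s) := abs_of_pos (by positivity)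
    rw [habs]
    rcases le_or_gt (|z|) 1 with hzle | hzgt
    · -- |z| ≤ 1 : D ≥ z², 0 ≤ 1-D ≤ 2δt
      have hzz : z^2 ≤ 1 := by nlinarith
      have hDz : z^2 ≤ D := by nlinarith
      have hsz : |z| ≤ s := by
        rw [hs]
        calc |z| = Real.sqrt (z^2) := (Real.sqrt_sq_eq_abs z).symm
        _ ≤ Real.sqrt D := Real.sqrt_le_sqrt hDz
      have h1Dnn : 0 ≤ 1 - D := by nlinarith
      have h1Dle : 1 - D ≤ 2*δt := by nlinarith
      rw [abs_of_nonneg h1Dnn]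
      have step1 : |z| * (1-D) ≤ s * (2*δt) := mul_le_mul hsz h1Dle h1Dnn hs0.le
      have hfac : (1:ℝ) ≤ (1+|z|^3)*(1+s) := by nlinarith
      have step2 := mul_le_mul_of_nonneg_left hfac
        (mul_nonneg (by linarith : (0:ℝ) ≤ 2*δt) hs0.le)
      nlinarith [step1, step2]
    · -- |z| ≥ 1 : D ≥ 1, |1-D| = (z²-1)(1-u) ≤ 2δt z²
      have hzz : 1 ≤ z^2 := by nlinarith
      have hD1 : 1 ≤ D := by nlinarith
      have hs1 : 1 ≤ s := by
        rw [hs]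
        calc (1:ℝ) = Real.sqrt 1 := Real.sqrt_one.symm
        _ ≤ Real.sqrt D := Real.sqrt_le_sqrt hD1
      have h1Dnp : 1 - D ≤ 0 := by linarith
      rw [abs_of_nonpos h1Dnp]
      have hun : (0:ℝ) ≤ 1-u := by linarith
      have h1Dle : -(1-D) ≤ 2*δt*z^2 := by
        have hDeq : -(1-D) = (z^2-1)*(1-u) := by rw [hD]; ring
        have a := mul_le_mul (by linarith : z^2-1 ≤ z^2) hut hun (sq_nonneg z)
        linarith [a, hDeq.le, hDeq.ge]
      have step1 : |z| * -(1-D) ≤ 2*δt*|z|^3 := by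
        have ha := mul_le_mul_of_nonneg_left h1Dle (abs_nonneg z)
        have hb : |z| * (2*δt*z^2) = 2*δt*|z| ^ 3 := by rw [← hz2]; ring
        linarith [ha, hb.le, hb.ge]
      have hss : (2:ℝ) ≤ s*(1+s) := by
        have h2s : (2:ℝ) ≤ 1+s := by linarith
        calc (2:ℝ) = 1*2 := by ring
        _ ≤ s*(1+s) := mul_le_mul hs1 h2s (by norm_num) hs0.le
      have step2 : 2*δt*|z|^3 ≤ 2*(1+|z|^3)*δt*(s*(1+s)) := by
        have hA : (0:ℝ) ≤ 2*δt*(1+|z|^3) := by positivity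
        have h := mul_le_mul_of_nonneg_left hss hA
        have h2 : 2*δt*|z|^3 ≤ 2*δt*(1+|z|^3) * 2 := by
          nlinarith [mul_nonneg hpos.le hz3, hpos.le]
        linarith [h, h2]
      linarith [step1, step2]
end

section
/- (Factorization estimate, Lemma 3.2.) Let E₁ and E₂ be real Banach spaces, let T > 0, p > 1, r ≥ 0, M > 0, and γ > 1/p + r. Let S : (0, T] → L(E₂, E₁) be a family of continuous linear operators satisfying ‖S(t)x‖_{E₁} ≤ M·t^{−r}·‖x‖_{E₂} for all t ∈ (0, T] and x ∈ E₂. Let f : (0, T) → E₂ be strongly measurable with ∫₀^T ‖f(s)‖_{E₂}^p ds < ∞, and assume that for each t ∈ (0, T] the map s ↦ S(t − s) f(s) is strongly measurable on (0, t). Then there exists a constant C = C(M, p, r, γ, T) ∈ (0,∞) such that for every t ∈ (0, T] the Bochner integral G_γ f(t) := ∫₀^t (t − s)^{γ−1} S(t − s) f(s) ds exists and ‖G_γ f(t)‖_{E₁} ≤ C·(∫₀^T ‖f(s)‖_{E₂}^p ds)^{1/p}. -/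
open MeasureTheory

/-- Factorization estimate (Lemma 3.2). `E₁`, `E₂` Banach spaces, `T > 0`, `p > 1`,
`r ≥ 0`, `M > 0`, `γ > 1/p + r`, `S : (0,T] → L(E₂,E₁)` with
`‖S(t)x‖ ≤ M t^{-r} ‖x‖`, and `f : (0,T) → E₂` strongly measurable with
`∫₀ᵀ ‖f(s)‖ᵖ ds < ∞`, such that `s ↦ S(t-s) f(s)` is strongly measurable on `(0,t)`.
Then there is `C = C(M,p,r,γ,T)` such that for each `t ∈ (0,T]` the Bochner integral
`G_γ f(t) = ∫₀ᵗ (t-s)^{γ-1} S(t-s) f(s) ds` exists and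
`‖G_γ f(t)‖ ≤ C (∫₀ᵀ ‖f(s)‖ᵖ ds)^{1/p}`. -/
theorem factorization_estimate
    {E₁ E₂ : Type*} [NormedAddCommGroup E₁] [NormedSpace ℝ E₁] [CompleteSpace E₁]
    [NormedAddCommGroup E₂] [NormedSpace ℝ E₂]
    (T p r M γ : ℝ) (hT : 0 < T) (hp : 1 < p) (hr : 0 ≤ r) (hM : 0 < M)
    (hγ : 1 / p + r < γ)
    (S : ℝ → E₂ →L[ℝ] E₁)
    (hS : ∀ t ∈ Set.Ioc (0 : ℝ) T, ∀ x : E₂, ‖S t x‖ ≤ M * t ^ (-r) * ‖x‖)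
    (f : ℝ → E₂)
    (hf_meas : AEStronglyMeasurable f (volume.restrict (Set.Ioo (0 : ℝ) T)))
    (hf_int : IntegrableOn (fun s => ‖f s‖ ^ p) (Set.Ioo (0 : ℝ) T))
    (hSf_meas : ∀ t ∈ Set.Ioc (0 : ℝ) T,
      AEStronglyMeasurable (fun s => S (t - s) (f s))
        (volume.restrict (Set.Ioo (0 : ℝ) t))) :
    ∃ C : ℝ, 0 < C ∧ ∀ t ∈ Set.Ioc (0 : ℝ) T,
      IntegrableOn (fun s => (t - s) ^ (γ - 1) • S (t - s) (f s)) (Set.Ioo (0 : ℝ) t) ∧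
      ‖∫ s in Set.Ioo (0 : ℝ) t, (t - s) ^ (γ - 1) • S (t - s) (f s)‖
        ≤ C * (∫ s in Set.Ioo (0 : ℝ) T, ‖f s‖ ^ p) ^ (1 / p) := by

  have hp0 : (0:ℝ) < p := lt_trans zero_lt_one hp
  have hpq : p.HolderConjugate (p / (p - 1)) := Real.HolderConjugate.conjExponent hp
  set q : ℝ := p / (p - 1) with hq_def
  have hq0 : 0 < q := hpq.symm.pos
  have hinv : p⁻¹ + q⁻¹ = 1 := hpq.inv_add_inv_eq_one
  set a : ℝ := γ - 1 - r with ha_def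
  set b : ℝ := a * q with hb_def
  have ha : -(1/q) < a := by
    have : 1/p - 1 = -(1/q) := by
      rw [one_div, one_div, ← hinv]; ring
    rw [← this, ha_def]; linarith
  have hb : -1 < b := by
    have h1 : (-(1/q)) * q < a * q := mul_lt_mul_of_pos_right ha hq0
    have h2 : (-(1/q)) * q = -1 := by field_simp
    rw [hb_def]
    calc (-1:ℝ) = (-(1/q)) * q := h2.symm
      _ < a * q := h1
  -- integrability of u ^ b on intervals
  have hKintT : IntegrableOn (fun u : ℝ => u ^ b) (Set.Ioo 0 T) := by
    have h1 : IntervalIntegrable (fun u : ℝ => u ^ b) volume 0 T :=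
      intervalIntegral.intervalIntegrable_rpow' hb
    exact ((intervalIntegrable_iff_integrableOn_Ioc_of_le hT.le).mp h1).mono_set
      Set.Ioo_subset_Ioc_self
  set K : ℝ := ∫ u in Set.Ioo (0:ℝ) T, u ^ b with hK_def
  have hKval : K = T ^ (b + 1) / (b + 1) := by
    rw [hK_def, ← integral_Ioc_eq_integral_Ioo, ← intervalIntegral.integral_of_le hT.le,
      integral_rpow (Or.inl hb)]
    rw [Real.zero_rpow (by linarith : b + 1 ≠ 0)]
    ring
  have hKpos : 0 < K := by
    rw [hKval]
    have : 0 < b + 1 := by linarith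
    positivity
  refine ⟨M * K ^ (1/q), mul_pos hM (Real.rpow_pos_of_pos hKpos _), fun t ht => ?_⟩
  obtain ⟨ht0, htT⟩ := ht
  have hsub : Set.Ioo (0:ℝ) t ⊆ Set.Ioo (0:ℝ) T := Set.Ioo_subset_Ioo le_rfl htT
  have hOq0 : (ENNReal.ofReal q) ≠ 0 := by
    simp [ENNReal.ofReal_eq_zero, not_le, hq0]
  have hOp0 : (ENNReal.ofReal p) ≠ 0 := by
    simp [ENNReal.ofReal_eq_zero, not_le, hp0]
  -- measurability of the kernel powers
  have hφmeas : ∀ c : ℝ, AEStronglyMeasurable (fun s : ℝ => (t - s) ^ c)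
      (volume.restrict (Set.Ioo (0:ℝ) t)) := fun c =>
    ((measurable_const.sub measurable_id).pow measurable_const).aestronglyMeasurable
  -- integrability of (t-s)^b on (0,t)
  have hφb_int : IntegrableOn (fun s : ℝ => (t - s) ^ b) (Set.Ioo 0 t) := by
    have h1 : IntervalIntegrable (fun u : ℝ => u ^ b) volume 0 t :=
      intervalIntegral.intervalIntegrable_rpow' hb
    have h2 := h1.comp_sub_left t
    rw [sub_self, sub_zero] at h2
    have h3 : IntervalIntegrable (fun x : ℝ => (t - x) ^ b) volume 0 t := h2.symm
    rw [intervalIntegrable_iff_integrableOn_Ioo_of_le ht0.le] at h3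
    exact h3
  have hφq_eq : ∀ᵐ s ∂(volume.restrict (Set.Ioo (0:ℝ) t)),
      (t - s) ^ b = ‖(t - s) ^ a‖ ^ q := by
    filter_upwards [ae_restrict_mem measurableSet_Ioo] with s hs
    have hts : (0:ℝ) < t - s := sub_pos.2 hs.2
    rw [Real.norm_of_nonneg (Real.rpow_nonneg hts.le _), ← Real.rpow_mul hts.le]
  have hφLq : MemLp (fun s : ℝ => (t - s) ^ a) (ENNReal.ofReal q)
      (volume.restrict (Set.Ioo (0:ℝ) t)) := by
    rw [← memLp_norm_rpow_iff (hφmeas a) hOq0 ENNReal.ofReal_ne_top,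
      ENNReal.toReal_ofReal hq0.le, ENNReal.div_self hOq0 ENNReal.ofReal_ne_top,
      memLp_one_iff_integrable]
    exact hφb_int.congr hφq_eq
  -- f is in L^p on (0,t)
  have hfmeas_t : AEStronglyMeasurable f (volume.restrict (Set.Ioo (0:ℝ) t)) :=
    hf_meas.mono_measure (Measure.restrict_mono hsub le_rfl)
  have hfp_int_t : IntegrableOn (fun s => ‖f s‖ ^ p) (Set.Ioo (0:ℝ) t) :=
    hf_int.mono_set hsub
  have hfLp : MemLp f (ENNReal.ofReal p) (volume.restrict (Set.Ioo (0:ℝ) t)) := by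
    rw [← memLp_norm_rpow_iff hfmeas_t hOp0 ENNReal.ofReal_ne_top,
      ENNReal.toReal_ofReal hp0.le, ENNReal.div_self hOp0 ENNReal.ofReal_ne_top,
      memLp_one_iff_integrable]
    exact hfp_int_t
  -- integrable product (Holder)
  have hprod : Integrable (fun s : ℝ => (t - s) ^ a * ‖f s‖)
      (volume.restrict (Set.Ioo (0:ℝ) t)) := by
    have hexp : (1:ENNReal) / 1 = 1 / ENNReal.ofReal q + 1 / ENNReal.ofReal p := by
      rw [one_div, one_div, one_div, inv_one]
      rw [add_comm, hpq.inv_add_inv_ennreal]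
    have h := (hfLp.norm).smul hφLq (r := 1) (hpqr := ⟨by simpa [one_div] using hexp.symm⟩)
    rw [memLp_one_iff_integrable] at h
    exact h
  have hmajor : Integrable (fun s : ℝ => M * ((t - s) ^ a * ‖f s‖))
      (volume.restrict (Set.Ioo (0:ℝ) t)) := hprod.const_mul M
  -- pointwise bound
  have hbound : ∀ᵐ s ∂(volume.restrict (Set.Ioo (0:ℝ) t)),
      ‖(t - s) ^ (γ - 1) • S (t - s) (f s)‖ ≤ M * ((t - s) ^ a * ‖f s‖) := by
    filter_upwards [ae_restrict_mem measurableSet_Ioo] with s hs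
    have hts : (0:ℝ) < t - s := sub_pos.2 hs.2
    have htsT : t - s ≤ T := by
      have := hs.1; linarith
    have h1 := hS (t - s) ⟨hts, htsT⟩ (f s)
    rw [norm_smul, Real.norm_of_nonneg (Real.rpow_nonneg hts.le _)]
    have h2 : (t - s) ^ (γ - 1) * ‖S (t - s) (f s)‖
        ≤ (t - s) ^ (γ - 1) * (M * (t - s) ^ (-r) * ‖f s‖) :=
      mul_le_mul_of_nonneg_left h1 (Real.rpow_nonneg hts.le _)
    have h3 : (t - s) ^ (γ - 1) * (t - s) ^ (-r) = (t - s) ^ a := by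
      rw [← Real.rpow_add hts, ha_def]; ring_nf
    calc (t - s) ^ (γ - 1) * ‖S (t - s) (f s)‖
        ≤ (t - s) ^ (γ - 1) * (M * (t - s) ^ (-r) * ‖f s‖) := h2
      _ = M * (((t - s) ^ (γ - 1) * (t - s) ^ (-r)) * ‖f s‖) := by ring
      _ = M * ((t - s) ^ a * ‖f s‖) := by rw [h3]
  have hg_meas : AEStronglyMeasurable (fun s : ℝ => (t - s) ^ (γ - 1) • S (t - s) (f s))
      (volume.restrict (Set.Ioo (0:ℝ) t)) :=
    (hφmeas (γ - 1)).smul (hSf_meas t ⟨ht0, htT⟩)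
  have hg_int : IntegrableOn (fun s : ℝ => (t - s) ^ (γ - 1) • S (t - s) (f s))
      (Set.Ioo (0:ℝ) t) := Integrable.mono' hmajor hg_meas hbound
  refine ⟨hg_int, ?_⟩
  have hφq_eq' : ∀ᵐ s ∂(volume.restrict (Set.Ioo (0:ℝ) t)),
      (t - s) ^ b = ((t - s) ^ a) ^ q := by
    filter_upwards [ae_restrict_mem measurableSet_Ioo] with s hs
    have hts : (0:ℝ) < t - s := sub_pos.2 hs.2
    rw [← Real.rpow_mul hts.le]
  -- the L^q norm of the kernel
  have hφq_le : ∫ s in Set.Ioo (0:ℝ) t, ((t - s) ^ a) ^ q ≤ K := by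
    have e1 : ∫ s in Set.Ioo (0:ℝ) t, ((t - s) ^ a) ^ q
        = ∫ s in Set.Ioo (0:ℝ) t, (t - s) ^ b := (integral_congr_ae hφq_eq').symm
    have e2 : ∫ s in Set.Ioo (0:ℝ) t, (t - s) ^ b = ∫ u in Set.Ioo (0:ℝ) t, u ^ b := by
      rw [← integral_Ioc_eq_integral_Ioo, ← intervalIntegral.integral_of_le ht0.le,
        intervalIntegral.integral_comp_sub_left (fun u : ℝ => u ^ b) t, sub_self, sub_zero,
        intervalIntegral.integral_of_le ht0.le, integral_Ioc_eq_integral_Ioo]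
    rw [e1, e2, hK_def]
    refine setIntegral_mono_set hKintT ?_ (HasSubset.Subset.eventuallyLE hsub)
    filter_upwards [ae_restrict_mem measurableSet_Ioo] with u hu
    exact Real.rpow_nonneg hu.1.le _
  -- L^p monotonicity for f
  have hfp_le : ∫ s in Set.Ioo (0:ℝ) t, ‖f s‖ ^ p ≤ ∫ s in Set.Ioo (0:ℝ) T, ‖f s‖ ^ p := by
    refine setIntegral_mono_set hf_int ?_ (HasSubset.Subset.eventuallyLE hsub)
    exact Filter.Eventually.of_forall fun s => Real.rpow_nonneg (norm_nonneg _) _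
  have hfp_nonneg : (0:ℝ) ≤ ∫ s in Set.Ioo (0:ℝ) t, ‖f s‖ ^ p :=
    integral_nonneg fun s => Real.rpow_nonneg (norm_nonneg _) _
  have hfpT_nonneg : (0:ℝ) ≤ ∫ s in Set.Ioo (0:ℝ) T, ‖f s‖ ^ p :=
    integral_nonneg fun s => Real.rpow_nonneg (norm_nonneg _) _
  have hφq_nonneg : (0:ℝ) ≤ ∫ s in Set.Ioo (0:ℝ) t, ((t - s) ^ a) ^ q := by
    refine integral_nonneg_of_ae ?_
    filter_upwards [ae_restrict_mem measurableSet_Ioo] with s hs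
    exact Real.rpow_nonneg (Real.rpow_nonneg (sub_pos.2 hs.2).le _) _
  have hφ_nonneg : 0 ≤ᵐ[volume.restrict (Set.Ioo (0:ℝ) t)] fun s : ℝ => (t - s) ^ a := by
    filter_upwards [ae_restrict_mem measurableSet_Ioo] with s hs
    exact Real.rpow_nonneg (sub_pos.2 hs.2).le _
  -- main chain
  calc ‖∫ s in Set.Ioo (0:ℝ) t, (t - s) ^ (γ - 1) • S (t - s) (f s)‖
      ≤ ∫ s in Set.Ioo (0:ℝ) t, ‖(t - s) ^ (γ - 1) • S (t - s) (f s)‖ :=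
        norm_integral_le_integral_norm _
    _ ≤ ∫ s in Set.Ioo (0:ℝ) t, M * ((t - s) ^ a * ‖f s‖) :=
        integral_mono_ae hg_int.norm hmajor hbound
    _ = M * ∫ s in Set.Ioo (0:ℝ) t, (t - s) ^ a * ‖f s‖ := by
        rw [integral_const_mul]
    _ = M * ∫ s in Set.Ioo (0:ℝ) t, ‖f s‖ * (t - s) ^ a := by
        congr 1
        exact integral_congr_ae (Filter.Eventually.of_forall fun s => mul_comm _ _)
    _ ≤ M * ((∫ s in Set.Ioo (0:ℝ) t, ‖f s‖ ^ p) ^ (1/p)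
          * (∫ s in Set.Ioo (0:ℝ) t, ((t - s) ^ a) ^ q) ^ (1/q)) :=
        mul_le_mul_of_nonneg_left
          (integral_mul_le_Lp_mul_Lq_of_nonneg hpq
            (Filter.Eventually.of_forall fun s => norm_nonneg _) hφ_nonneg
            hfLp.norm hφLq) hM.le
    _ ≤ M * ((∫ s in Set.Ioo (0:ℝ) T, ‖f s‖ ^ p) ^ (1/p) * K ^ (1/q)) := by
        refine mul_le_mul_of_nonneg_left ?_ hM.le
        refine mul_le_mul ?_ ?_ (Real.rpow_nonneg hφq_nonneg _)
          (Real.rpow_nonneg hfpT_nonneg _)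
        · exact Real.rpow_le_rpow hfp_nonneg hfp_le (by positivity)
        · exact Real.rpow_le_rpow hφq_nonneg hφq_le (by positivity)
    _ = M * K ^ (1/q) * (∫ s in Set.Ioo (0:ℝ) T, ‖f s‖ ^ p) ^ (1/p) := by ring
end

section
/- (Increment bound for a regular diagonal noise semigroup.) Let (λ_k)_{k ≥ 1} be positive reals, (q_k)_{k ≥ 1} nonnegative reals, and β ∈ (0, 1/2] with Σ_{k=1}^∞ q_k·λ_k^{2β−1} < ∞. Then for every t₀ ≥ 0 and δ ≥ 0, ∫₀^{t₀} Σ_{k=1}^∞ q_k · exp(−2·λ_k·(t₀ − r)) · (1 − exp(−λ_k·δ))² dr ≤ (δ^{2β}/2) · Σ_{k=1}^∞ q_k·λ_k^{2β−1}. -/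
open MeasureTheory

lemma aux_one_minus_exp_sq_le {x β : ℝ} (hx : 0 ≤ x) (hβ : 0 < β) (hβ' : β ≤ 1/2) :
    (1 - Real.exp (-x)) ^ 2 ≤ x ^ (2 * β) := by
  rcases eq_or_lt_of_le hx with h | hxpos
  · simp [← h]
    positivity
  have hy0 : 0 ≤ 1 - Real.exp (-x) := by
    have := Real.exp_le_one_iff.2 (by linarith : -x ≤ 0)
    linarith
  rcases le_or_gt 1 x with h1 | h1
  · have : (1 - Real.exp (-x)) ^ 2 ≤ 1 := by
      have h1 : 1 - Real.exp (-x) ≤ 1 := by nlinarith [Real.exp_pos (-x)]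
      nlinarith [Real.exp_pos (-x)]
    calc (1 - Real.exp (-x)) ^ 2 ≤ 1 := this
      _ ≤ x ^ (2 * β) := Real.one_le_rpow h1 (by positivity)
  · have hle : 1 - Real.exp (-x) ≤ x := by
      have := Real.add_one_le_exp (-x)
      linarith
    have h2 : (1 - Real.exp (-x)) ^ 2 ≤ x ^ 2 := by nlinarith
    have h3 : x ^ (2:ℝ) ≤ x ^ (2 * β) :=
      Real.rpow_le_rpow_of_exponent_ge hxpos h1.le (by linarith)
    calc (1 - Real.exp (-x)) ^ 2 ≤ x ^ 2 := h2
      _ = x ^ (2:ℝ) := by rw [← Real.rpow_natCast x 2]; norm_num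
      _ ≤ x ^ (2 * β) := h3

lemma aux_integral_exp {lam t₀ : ℝ} (hlam : 0 < lam) (ht₀ : 0 ≤ t₀) :
    ∫ r in Set.Ioc (0:ℝ) t₀, Real.exp (-2 * lam * (t₀ - r)) ≤ 1 / (2 * lam) := by
  have hderiv : ∀ r ∈ Set.uIcc (0:ℝ) t₀, HasDerivAt
      (fun s => Real.exp (-2 * lam * (t₀ - s)) / (2 * lam))
      (Real.exp (-2 * lam * (t₀ - r))) r := by
    intro r _
    have h1 : HasDerivAt (fun s : ℝ => -2 * lam * (t₀ - s)) (2 * lam) r := by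
      simpa using (((hasDerivAt_id r).const_sub t₀).const_mul (-2 * lam))
    have := (h1.exp).div_const (2 * lam)
    rw [mul_div_assoc, div_self (by positivity), mul_one] at this
    convert this using 1
  have hcont : IntervalIntegrable (fun r => Real.exp (-2 * lam * (t₀ - r)))
      volume 0 t₀ := (Continuous.intervalIntegrable (by continuity) _ _)
  have heq := intervalIntegral.integral_eq_sub_of_hasDerivAt hderiv hcont
  rw [← intervalIntegral.integral_of_le ht₀, heq]
  have := Real.exp_pos (-2 * lam * (t₀ - 0))
  have h2 : Real.exp (-2 * lam * (t₀ - t₀)) = 1 := by norm_num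
  rw [h2]
  rw [div_sub_div_same, div_le_div_iff₀ (by positivity) (by positivity)]
  nlinarith

lemma aux_term {lam q β t₀ δ : ℝ} (hlam : 0 < lam) (hq : 0 ≤ q)
    (hβ : 0 < β) (hβ' : β ≤ 1/2) (ht₀ : 0 ≤ t₀) (hδ : 0 ≤ δ) :
    (∫⁻ r in Set.Ioc (0:ℝ) t₀, ENNReal.ofReal
        (q * Real.exp (-2 * lam * (t₀ - r)) * (1 - Real.exp (-lam * δ)) ^ 2))
      ≤ ENNReal.ofReal (δ ^ (2 * β) / 2 * (q * lam ^ (2 * β - 1))) := by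
  set d : ℝ := (1 - Real.exp (-lam * δ)) ^ 2 with hd_def
  have hd0 : 0 ≤ d := sq_nonneg _
  have hg_cont : Continuous (fun r : ℝ => q * Real.exp (-2 * lam * (t₀ - r)) * d) := by
    continuity
  have hint : IntegrableOn (fun r : ℝ => q * Real.exp (-2 * lam * (t₀ - r)) * d)
      (Set.Ioc (0:ℝ) t₀) volume := hg_cont.integrableOn_Ioc
  have hnn : 0 ≤ᵐ[volume.restrict (Set.Ioc (0:ℝ) t₀)]
      (fun r : ℝ => q * Real.exp (-2 * lam * (t₀ - r)) * d) := by
    filter_upwards with r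
    positivity
  rw [← MeasureTheory.ofReal_integral_eq_lintegral_ofReal hint hnn]
  apply ENNReal.ofReal_le_ofReal
  have heq : (fun r : ℝ => q * Real.exp (-2 * lam * (t₀ - r)) * d)
      = fun r : ℝ => (q * d) * Real.exp (-2 * lam * (t₀ - r)) := by
    ext r; ring
  rw [heq, MeasureTheory.integral_const_mul]
  set I : ℝ := ∫ r in Set.Ioc (0:ℝ) t₀, Real.exp (-2 * lam * (t₀ - r)) with hI_def
  have hI_le : I ≤ 1 / (2 * lam) := aux_integral_exp hlam ht₀
  have hI_nn : 0 ≤ I := by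
    apply MeasureTheory.setIntegral_nonneg measurableSet_Ioc
    intro r _; positivity
  have hd_le : d ≤ lam ^ (2 * β) * δ ^ (2 * β) := by
    have h := aux_one_minus_exp_sq_le (x := lam * δ) (by positivity) hβ hβ'
    rw [hd_def, neg_mul]
    calc (1 - Real.exp (-(lam * δ))) ^ 2 ≤ (lam * δ) ^ (2 * β) := h
      _ = lam ^ (2 * β) * δ ^ (2 * β) := Real.mul_rpow hlam.le hδ
  have hrw : lam ^ (2 * β - 1) = lam ^ (2 * β) / lam := by
    rw [Real.rpow_sub hlam, Real.rpow_one]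
  rw [hrw]
  have step1 : (q * d) * I ≤ (q * d) * (1 / (2 * lam)) :=
    mul_le_mul_of_nonneg_left hI_le (by positivity)
  have step2 : (q * d) * (1 / (2 * lam)) ≤ (q * (lam ^ (2*β) * δ ^ (2*β))) * (1 / (2 * lam)) :=
    mul_le_mul_of_nonneg_right (mul_le_mul_of_nonneg_left hd_le hq) (by positivity)
  have step3 : (q * (lam ^ (2*β) * δ ^ (2*β))) * (1 / (2 * lam))
      = δ ^ (2 * β) / 2 * (q * (lam ^ (2 * β) / lam)) := by
    field_simp
  linarith

/-- Increment bound for a regular diagonal noise semigroup: if `λ_k > 0`, `q_k ≥ 0`,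
`β ∈ (0, 1/2]` and `Σ q_k λ_k^{2β-1} < ∞`, then for every `t₀ ≥ 0` and `δ ≥ 0`,
`∫₀^{t₀} Σ_k q_k exp(-2 λ_k (t₀-r)) (1 - exp(-λ_k δ))² dr ≤ (δ^{2β}/2) Σ_k q_k λ_k^{2β-1}`. -/
theorem diagonal_noise_increment_bound (lam q : ℕ → ℝ)
    (hlam : ∀ k : ℕ, 1 ≤ k → 0 < lam k) (hq : ∀ k : ℕ, 1 ≤ k → 0 ≤ q k)
    (β : ℝ) (hβ : β ∈ Set.Ioc (0 : ℝ) (1 / 2))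
    (hsum : Summable (fun k : ℕ => q (k + 1) * lam (k + 1) ^ (2 * β - 1)))
    (t₀ δ : ℝ) (ht₀ : 0 ≤ t₀) (hδ : 0 ≤ δ) :
    (∫⁻ r in Set.Ioc (0 : ℝ) t₀, ∑' k : ℕ,
        ENNReal.ofReal (q (k + 1) * Real.exp (-2 * lam (k + 1) * (t₀ - r)) *
          (1 - Real.exp (-lam (k + 1) * δ)) ^ 2))
      ≤ ENNReal.ofReal (δ ^ (2 * β) / 2 *
          ∑' k : ℕ, q (k + 1) * lam (k + 1) ^ (2 * β - 1)) := by
  obtain ⟨hβ0, hβ2⟩ := hβ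
  have hmeas : ∀ k : ℕ, AEMeasurable (fun r : ℝ =>
      ENNReal.ofReal (q (k + 1) * Real.exp (-2 * lam (k + 1) * (t₀ - r)) *
        (1 - Real.exp (-lam (k + 1) * δ)) ^ 2))
      (volume.restrict (Set.Ioc (0:ℝ) t₀)) := by
    intro k
    exact (ENNReal.continuous_ofReal.comp (by continuity)).measurable.aemeasurable
  rw [MeasureTheory.lintegral_tsum hmeas]
  have hsum' : Summable (fun k : ℕ => δ ^ (2 * β) / 2 * (q (k + 1) * lam (k + 1) ^ (2 * β - 1))) :=
    hsum.mul_left _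
  calc (∑' k : ℕ, ∫⁻ r in Set.Ioc (0:ℝ) t₀,
        ENNReal.ofReal (q (k + 1) * Real.exp (-2 * lam (k + 1) * (t₀ - r)) *
          (1 - Real.exp (-lam (k + 1) * δ)) ^ 2))
      ≤ ∑' k : ℕ, ENNReal.ofReal (δ ^ (2 * β) / 2 * (q (k + 1) * lam (k + 1) ^ (2 * β - 1))) := by
        apply ENNReal.tsum_le_tsum
        intro k
        exact aux_term (hlam (k+1) (by omega)) (hq (k+1) (by omega)) hβ0 hβ2 ht₀ hδ
    _ = ENNReal.ofReal (∑' k : ℕ, δ ^ (2 * β) / 2 * (q (k + 1) * lam (k + 1) ^ (2 * β - 1))) := by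
        rw [ENNReal.ofReal_tsum_of_nonneg (fun k => by
          have h1 := hq (k+1) (by omega)
          have h2 := (hlam (k+1) (by omega)).le
          positivity) hsum']
    _ = ENNReal.ofReal (δ ^ (2 * β) / 2 * ∑' k : ℕ, q (k + 1) * lam (k + 1) ^ (2 * β - 1)) := by
        rw [tsum_mul_left]
end

section
/- (Increment bound for the white-noise diagonal semigroup, key estimate for the order-1/4 rate.) Let c > 0, T > 0, and let (λ_k)_{k ≥ 1} be positive reals with λ_k ≥ c·k² for all k ≥ 1. Then there exists a constant C = C(c, T) ∈ (0,∞) such that for every t₀ ∈ [0, T] and every δ ≥ 0, ∫₀^{t₀} Σ_{k=1}^∞ exp(−2·λ_k·(t₀ − r)) · (1 − exp(−λ_k·δ))² dr ≤ C·δ^{1/2}. -/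
open MeasureTheory

private lemma tail_sum_bound (K : ℕ) (s : Finset ℕ) (hs : ∀ k ∈ s, K ≤ k) :
    ∑ k ∈ s, (((k : ℝ) + 1) ^ 2)⁻¹ ≤ 2 / ((K : ℝ) + 1) := by
  classical
  set N : ℕ := (s.sup id) + 2 with hN
  have h1 : ∑ k ∈ s, (((k : ℝ) + 1) ^ 2)⁻¹
      = ∑ i ∈ s.image Nat.succ, ((i : ℝ) ^ 2)⁻¹ := by
    rw [Finset.sum_image (fun a _ b _ h => Nat.succ_injective h)]
    apply Finset.sum_congr rfl
    intro k _
    push_cast [Nat.succ_eq_add_one]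
    ring_nf
  rw [h1]
  have h2 : ∑ i ∈ s.image Nat.succ, ((i : ℝ) ^ 2)⁻¹
      ≤ ∑ i ∈ Finset.Ioo K N, ((i : ℝ) ^ 2)⁻¹ := by
    apply Finset.sum_le_sum_of_subset_of_nonneg
    · intro i hi
      simp only [Finset.mem_image] at hi
      obtain ⟨k, hk, rfl⟩ := hi
      have hk1 := hs k hk
      have hk2 : k ≤ s.sup id := Finset.le_sup (f := id) hk
      simp only [Finset.mem_Ioo, Nat.succ_eq_add_one]
      omega
    · intro i _ _
      positivity
  exact h2.trans (sum_Ioo_inv_sq_le K N)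

private lemma sum_min_bound (c : ℝ) (hc : 0 < c) (δ : ℝ) (hδ : 0 ≤ δ) (s : Finset ℕ) :
    ∑ k ∈ s, min δ ((c * ((k : ℝ) + 1) ^ 2)⁻¹) ≤ (2 + 2 / c) * Real.sqrt δ := by
  classical
  have hinv : ∀ k : ℕ, (c * ((k : ℝ) + 1) ^ 2)⁻¹ = c⁻¹ * (((k : ℝ) + 1) ^ 2)⁻¹ := by
    intro k; rw [mul_inv]
  rcases eq_or_lt_of_le hδ with rfl | hδ'
  · have : ∀ k ∈ s, min (0:ℝ) ((c * ((k : ℝ) + 1) ^ 2)⁻¹) = 0 := by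
      intro k _
      have : (0:ℝ) ≤ (c * ((k : ℝ) + 1) ^ 2)⁻¹ := by positivity
      exact min_eq_left this
    rw [Finset.sum_congr rfl this]
    simp
  · have hsq : 0 < Real.sqrt δ := Real.sqrt_pos.mpr hδ'
    rcases le_or_gt 1 δ with hδ1 | hδ1
    · -- δ ≥ 1 : use the full tail bound
      have h1 : ∑ k ∈ s, min δ ((c * ((k : ℝ) + 1) ^ 2)⁻¹)
          ≤ c⁻¹ * ∑ k ∈ s, (((k : ℝ) + 1) ^ 2)⁻¹ := by
        rw [Finset.mul_sum]
        apply Finset.sum_le_sum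
        intro k _
        rw [hinv k]
        exact min_le_right _ _
      have h2 := tail_sum_bound 0 s (fun k _ => Nat.zero_le k)
      have hsq1 : (1:ℝ) ≤ Real.sqrt δ := by
        rw [show (1:ℝ) = Real.sqrt 1 by simp]
        exact Real.sqrt_le_sqrt hδ1
      have h3 : c⁻¹ * ∑ k ∈ s, (((k : ℝ) + 1) ^ 2)⁻¹ ≤ c⁻¹ * 2 :=
        mul_le_mul_of_nonneg_left (h2.trans (by norm_num)) (by positivity)
      refine h1.trans (h3.trans ?_)
      have h4 : (2 + 2 / c) * 1 ≤ (2 + 2 / c) * Real.sqrt δ :=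
        mul_le_mul_of_nonneg_left hsq1 (by positivity)
      have h5 : (2:ℝ) / c = c⁻¹ * 2 := by ring
      linarith
    · -- 0 < δ < 1
      set K : ℕ := ⌈(Real.sqrt δ)⁻¹⌉₊ with hK
      have hKge : (Real.sqrt δ)⁻¹ ≤ (K : ℝ) := Nat.le_ceil _
      have hKlt : (K : ℝ) < (Real.sqrt δ)⁻¹ + 1 :=
        Nat.ceil_lt_add_one (by positivity)
      have hsplit := Finset.sum_filter_add_sum_filter_not s (fun k => k < K)
        (fun k => min δ ((c * ((k : ℝ) + 1) ^ 2)⁻¹))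
      rw [← hsplit]
      have hmulsqrt : (Real.sqrt δ)⁻¹ * δ = Real.sqrt δ := by
        rw [← Real.mul_self_sqrt hδ]
        field_simp
        rw [Real.sqrt_sq (Real.sqrt_nonneg δ)]
      have hδsqrt : δ ≤ Real.sqrt δ := by
        nlinarith [Real.sq_sqrt hδ, Real.sqrt_nonneg δ, hδ1.le, hsq]
      -- first part
      have part1 : ∑ k ∈ s.filter (fun k => k < K), min δ ((c * ((k : ℝ) + 1) ^ 2)⁻¹)
          ≤ 2 * Real.sqrt δ := by
        have hle : ∑ k ∈ s.filter (fun k => k < K), min δ ((c * ((k : ℝ) + 1) ^ 2)⁻¹)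
            ≤ ∑ _k ∈ s.filter (fun k => k < K), δ :=
          Finset.sum_le_sum (fun k _ => min_le_left _ _)
        have hcard : (s.filter (fun k => k < K)).card ≤ K := by
          have : s.filter (fun k => k < K) ⊆ Finset.range K := by
            intro k hk
            simp only [Finset.mem_filter] at hk
            exact Finset.mem_range.mpr hk.2
          simpa using Finset.card_le_card this
        have : ∑ _k ∈ s.filter (fun k => k < K), δ ≤ (K : ℝ) * δ := by
          rw [Finset.sum_const, nsmul_eq_mul]
          exact mul_le_mul_of_nonneg_right (by exact_mod_cast hcard) hδ
        refine hle.trans (this.trans ?_)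
        have : (K : ℝ) * δ ≤ ((Real.sqrt δ)⁻¹ + 1) * δ :=
          mul_le_mul_of_nonneg_right hKlt.le hδ
        refine this.trans ?_
        rw [add_mul, one_mul, hmulsqrt]
        linarith
      -- second part
      have part2 : ∑ k ∈ s.filter (fun k => ¬ k < K), min δ ((c * ((k : ℝ) + 1) ^ 2)⁻¹)
          ≤ (2 / c) * Real.sqrt δ := by
        have hle : ∑ k ∈ s.filter (fun k => ¬ k < K), min δ ((c * ((k : ℝ) + 1) ^ 2)⁻¹)
            ≤ c⁻¹ * ∑ k ∈ s.filter (fun k => ¬ k < K), (((k : ℝ) + 1) ^ 2)⁻¹ := by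
          rw [Finset.mul_sum]
          apply Finset.sum_le_sum
          intro k _
          rw [hinv k]
          exact min_le_right _ _
        have htail := tail_sum_bound K (s.filter (fun k => ¬ k < K))
          (by intro k hk; simp only [Finset.mem_filter] at hk; omega)
        have hKinv : 2 / ((K : ℝ) + 1) ≤ 2 * Real.sqrt δ := by
          rw [div_le_iff₀ (by positivity)]
          have h1 : (Real.sqrt δ)⁻¹ ≤ (K : ℝ) + 1 := by linarith
          have := mul_le_mul_of_nonneg_left h1 (by positivity : (0:ℝ) ≤ 2 * Real.sqrt δ)
          calc (2:ℝ) = 2 * Real.sqrt δ * (Real.sqrt δ)⁻¹ := by field_simp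
            _ ≤ 2 * Real.sqrt δ * ((K : ℝ) + 1) := this
        refine hle.trans ?_
        have : c⁻¹ * ∑ k ∈ s.filter (fun k => ¬ k < K), (((k : ℝ) + 1) ^ 2)⁻¹
            ≤ c⁻¹ * (2 * Real.sqrt δ) :=
          mul_le_mul_of_nonneg_left (htail.trans hKinv) (by positivity)
        refine this.trans ?_
        apply le_of_eq
        ring
      have : (2 + 2 / c) * Real.sqrt δ = 2 * Real.sqrt δ + (2 / c) * Real.sqrt δ := by ring
      rw [this]
      exact add_le_add part1 part2


private lemma lintegral_exp_decay_le (a A t₀ : ℝ) (ha : 0 < a) (hA : 0 ≤ A) (ht : 0 ≤ t₀) :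
    (∫⁻ r in Set.Ioc (0 : ℝ) t₀, ENNReal.ofReal (Real.exp (-(a * (t₀ - r))) * A))
      ≤ ENNReal.ofReal (A / a) := by
  have hcont : Continuous fun r : ℝ => Real.exp (-(a * (t₀ - r))) * A := by continuity
  have hint : IntegrableOn (fun r : ℝ => Real.exp (-(a * (t₀ - r))) * A)
      (Set.Ioc 0 t₀) volume := hcont.integrableOn_Ioc
  have hnn : 0 ≤ᵐ[volume.restrict (Set.Ioc (0:ℝ) t₀)]
      fun r => Real.exp (-(a * (t₀ - r))) * A :=
    Filter.Eventually.of_forall fun r => by positivity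
  rw [← ofReal_integral_eq_lintegral_ofReal hint hnn]
  apply ENNReal.ofReal_le_ofReal
  have h1 : (∫ r in Set.Ioc (0:ℝ) t₀, Real.exp (-(a * (t₀ - r))) * A)
      = (∫ r in Set.Ioc (0:ℝ) t₀, Real.exp (-(a * (t₀ - r)))) * A := by
    rw [integral_mul_const]
  rw [h1]
  have h2 : (∫ r in Set.Ioc (0:ℝ) t₀, Real.exp (-(a * (t₀ - r))))
      = ∫ r in (0:ℝ)..t₀, Real.exp (-(a * (t₀ - r))) :=
    (intervalIntegral.integral_of_le ht).symm
  rw [h2]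
  have h3 : (∫ r in (0:ℝ)..t₀, Real.exp (-(a * (t₀ - r))))
      = ∫ x in (0:ℝ)..t₀, Real.exp (-(a * x)) := by
    have := intervalIntegral.integral_comp_sub_left (a := (0:ℝ)) (b := t₀)
      (fun y => Real.exp (-(a * y))) t₀
    simpa using this
  rw [h3]
  have h4 : (∫ x in (0:ℝ)..t₀, Real.exp (-(a * x)))
      = (1 - Real.exp (-(a * t₀))) / a := by
    simp only [← neg_mul]
    rw [intervalIntegral.integral_comp_mul_left (fun y => Real.exp y)
      (by simpa using ha.ne' : (-a) ≠ 0)]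
    rw [integral_exp]
    simp only [smul_eq_mul, mul_zero, Real.exp_zero, neg_mul]
    field_simp
    ring
  rw [h4]
  have he : 0 ≤ Real.exp (-(a * t₀)) := Real.exp_nonneg _
  rw [div_mul_eq_mul_div]
  gcongr
  nlinarith

/-- Increment bound for the white-noise diagonal semigroup (key estimate for the
order-1/4 rate): if `λ_k ≥ c k²` with `c > 0`, then there is `C = C(c,T) > 0` such that
for every `t₀ ∈ [0,T]` and `δ ≥ 0`,
`∫₀^{t₀} Σ_k exp(-2 λ_k (t₀-r)) (1 - exp(-λ_k δ))² dr ≤ C δ^{1/2}`. -/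
theorem white_noise_increment_bound (c T : ℝ) (hc : 0 < c) (hT : 0 < T)
    (lam : ℕ → ℝ) (hpos : ∀ k : ℕ, 1 ≤ k → 0 < lam k)
    (hlam : ∀ k : ℕ, 1 ≤ k → c * (k : ℝ) ^ 2 ≤ lam k) :
    ∃ C : ℝ, 0 < C ∧ ∀ t₀ ∈ Set.Icc (0 : ℝ) T, ∀ δ : ℝ, 0 ≤ δ →
      (∫⁻ r in Set.Ioc (0 : ℝ) t₀, ∑' k : ℕ,
          ENNReal.ofReal (Real.exp (-2 * lam (k + 1) * (t₀ - r)) *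
            (1 - Real.exp (-lam (k + 1) * δ)) ^ 2))
        ≤ ENNReal.ofReal (C * δ ^ ((1 : ℝ) / 2)) := by
  refine ⟨1 + 1 / c, by positivity, ?_⟩
  intro t₀ ht₀ δ hδ
  obtain ⟨ht0, _⟩ := ht₀
  have hmeas : ∀ k : ℕ, Measurable fun r : ℝ =>
      ENNReal.ofReal (Real.exp (-2 * lam (k + 1) * (t₀ - r)) *
        (1 - Real.exp (-lam (k + 1) * δ)) ^ 2) := by
    intro k
    apply Measurable.ennreal_ofReal
    fun_prop
  rw [lintegral_tsum (fun k => (hmeas k).aemeasurable)]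
  have hk : ∀ k : ℕ, (∫⁻ r in Set.Ioc (0:ℝ) t₀,
      ENNReal.ofReal (Real.exp (-2 * lam (k + 1) * (t₀ - r)) *
        (1 - Real.exp (-lam (k + 1) * δ)) ^ 2))
      ≤ ENNReal.ofReal ((1/2) * min δ ((c * ((k:ℝ)+1)^2)⁻¹)) := by
    intro k
    have hl : 0 < lam (k + 1) := hpos (k + 1) (Nat.le_add_left 1 k)
    have hlc : c * ((k:ℝ) + 1) ^ 2 ≤ lam (k + 1) := by
      have := hlam (k + 1) (Nat.le_add_left 1 k)
      push_cast at this
      linarith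
    set A : ℝ := (1 - Real.exp (-lam (k + 1) * δ)) ^ 2 with hA
    have hA0 : 0 ≤ A := sq_nonneg _
    have harg : ∀ r : ℝ, Real.exp (-2 * lam (k + 1) * (t₀ - r)) * A
        = Real.exp (-((2 * lam (k + 1)) * (t₀ - r))) * A := by
      intro r
      congr 1
      congr 1
      ring
    simp_rw [harg]
    refine (lintegral_exp_decay_le (2 * lam (k + 1)) A t₀ (by linarith) hA0 ht0).trans ?_
    apply ENNReal.ofReal_le_ofReal
    -- real estimate : A / (2 λ) ≤ (1/2) * min δ (c(k+1)²)⁻¹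
    set B : ℝ := c * ((k:ℝ) + 1) ^ 2 with hB
    have hB0 : 0 < B := by positivity
    have hBinv : 0 < B⁻¹ := by positivity
    have hBB : B * B⁻¹ = 1 := mul_inv_cancel₀ hB0.ne'
    have he0 : 0 ≤ Real.exp (-lam (k + 1) * δ) := Real.exp_nonneg _
    have he1 : Real.exp (-lam (k + 1) * δ) ≤ 1 := by
      rw [show -lam (k + 1) * δ = -(lam (k + 1) * δ) by ring]
      rw [Real.exp_neg]
      rw [inv_le_one_iff₀]
      right
      rw [show (1:ℝ) = Real.exp 0 by simp]
      exact Real.exp_le_exp.mpr (by positivity)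
    have he2 : 1 - Real.exp (-lam (k + 1) * δ) ≤ lam (k + 1) * δ := by
      have := Real.add_one_le_exp (-lam (k + 1) * δ)
      nlinarith
    have hA1 : A ≤ 1 := by rw [hA]; nlinarith
    have hA2 : A ≤ lam (k + 1) * δ := by rw [hA]; nlinarith
    rcases le_total δ (B⁻¹) with hmin | hmin
    · rw [min_eq_left hmin]
      rw [div_le_iff₀ (by linarith)]
      nlinarith
    · rw [min_eq_right hmin]
      rw [div_le_iff₀ (by linarith)]
      -- A ≤ (1/2) * B⁻¹ * (2 λ) = λ * B⁻¹ ≥ 1 ≥ A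
      have h1 : (1:ℝ) ≤ lam (k + 1) * B⁻¹ := by nlinarith
      nlinarith
  refine (ENNReal.tsum_le_tsum hk).trans ?_
  rw [ENNReal.tsum_eq_iSup_sum]
  apply iSup_le
  intro s
  rw [← ENNReal.ofReal_sum_of_nonneg (by
    intro k _
    have : (0:ℝ) ≤ min δ ((c * ((k:ℝ)+1)^2)⁻¹) := le_min hδ (by positivity)
    linarith)]
  apply ENNReal.ofReal_le_ofReal
  rw [← Finset.mul_sum]
  have hsum := sum_min_bound c hc δ hδ s
  rw [Real.sqrt_eq_rpow] at hsum
  have hpow : (0:ℝ) ≤ δ ^ ((1:ℝ)/2) := Real.rpow_nonneg hδ _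
  have h6 := mul_le_mul_of_nonneg_left hsum (by norm_num : (0:ℝ) ≤ 1/2)
  have h7 : (1/2) * ((2 + 2/c) * δ ^ ((1:ℝ)/2)) = (1 + 1/c) * δ ^ ((1:ℝ)/2) := by ring
  linarith
end

section
/- (Hölder-in-time smoothing of a diagonal semigroup on ℓ².) Let (λ_k)_{k ≥ 1} be positive reals and η ∈ (0, 1]. Then for all 0 < s₀ ≤ t₀ and every square-summable real sequence (x_k)_{k ≥ 1}, Σ_{k=1}^∞ (exp(−λ_k·s₀) − exp(−λ_k·t₀))² · x_k² ≤ (η/e)^{2η} · s₀^{−2η} · (t₀ − s₀)^{2η} · Σ_{k=1}^∞ x_k². -/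
lemma aux_sup (η s l : ℝ) (hη0 : 0 < η) (hs : 0 < s) (hl : 0 < l) :
    l ^ η * Real.exp (-(l * s)) ≤ (η / (Real.exp 1 * s)) ^ η := by
  have h1 : l ≤ (η / s) * Real.exp (l * s / η - 1) := by
    have h := Real.add_one_le_exp (l * s / η - 1)
    have h2 : l * s / η ≤ Real.exp (l * s / η - 1) := by linarith
    calc l = (η / s) * (l * s / η) := by field_simp
    _ ≤ (η / s) * Real.exp (l * s / η - 1) := by
        apply mul_le_mul_of_nonneg_left h2 (by positivity)
  have h3 : l ^ η ≤ ((η / s) * Real.exp (l * s / η - 1)) ^ η :=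
    Real.rpow_le_rpow hl.le h1 hη0.le
  have h4 : ((η / s) * Real.exp (l * s / η - 1)) ^ η
      = (η / s) ^ η * Real.exp (l * s - η) := by
    rw [Real.mul_rpow (by positivity) (Real.exp_pos _).le,
      ← Real.exp_one_rpow (l * s / η - 1), ← Real.rpow_mul (Real.exp_pos 1).le,
      Real.exp_one_rpow]
    have he : (l * s / η - 1) * η = l * s - η := by
      rw [sub_mul, one_mul, div_mul_cancel₀ _ hη0.ne']
    rw [he]
  have h5 : (η / (Real.exp 1 * s)) ^ η = (η / s) ^ η * Real.exp (-η) := by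
    have : η / (Real.exp 1 * s) = (η / s) * (Real.exp (-1)) := by
      rw [Real.exp_neg, mul_comm (Real.exp 1) s, ← div_div, div_eq_mul_inv]
    rw [this, Real.mul_rpow (by positivity) (Real.exp_pos _).le,
      ← Real.exp_one_rpow (-1), ← Real.rpow_mul (Real.exp_pos 1).le,
      Real.exp_one_rpow]
    norm_num
  calc l ^ η * Real.exp (-(l * s))
      ≤ (η / s) ^ η * Real.exp (l * s - η) * Real.exp (-(l * s)) := by
        apply mul_le_mul_of_nonneg_right (h4 ▸ h3) (Real.exp_pos _).le
    _ = (η / s) ^ η * Real.exp (-η) := by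
        rw [mul_assoc, ← Real.exp_add]; ring_nf
    _ = (η / (Real.exp 1 * s)) ^ η := h5.symm

lemma aux_one_sub_exp (η a : ℝ) (hη0 : 0 < η) (hη1 : η ≤ 1) (ha : 0 ≤ a) :
    1 - Real.exp (-a) ≤ a ^ η := by
  rcases eq_or_lt_of_le ha with h | h
  · simp only [← h, neg_zero, Real.exp_zero, sub_self]; positivity
  rcases le_or_gt a 1 with h1 | h1
  · have h2 : 1 - Real.exp (-a) ≤ a := by
      have := Real.add_one_le_exp (-a); linarith
    calc 1 - Real.exp (-a) ≤ a := h2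
      _ = a ^ (1:ℝ) := (Real.rpow_one a).symm
      _ ≤ a ^ η := Real.rpow_le_rpow_of_exponent_ge h h1 hη1
  · have : (1:ℝ) ≤ a ^ η := Real.one_le_rpow h1.le hη0.le
    have := (Real.exp_pos (-a)).le
    linarith

lemma aux_diff (η s t l : ℝ) (hη0 : 0 < η) (hη1 : η ≤ 1) (hs : 0 < s)
    (hst : s ≤ t) (hl : 0 < l) :
    Real.exp (-l * s) - Real.exp (-l * t) ≤ ((η / Real.exp 1) / s * (t - s)) ^ η := by
  have hts : 0 ≤ t - s := sub_nonneg.2 hst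
  have heq : Real.exp (-l * s) - Real.exp (-l * t)
      = Real.exp (-(l * s)) * (1 - Real.exp (-(l * (t - s)))) := by
    rw [mul_sub, mul_one, ← Real.exp_add]; ring_nf
  rw [heq]
  have h2 := aux_one_sub_exp η (l * (t - s)) hη0 hη1 (by positivity)
  calc Real.exp (-(l * s)) * (1 - Real.exp (-(l * (t - s))))
      ≤ Real.exp (-(l * s)) * (l * (t - s)) ^ η :=
        mul_le_mul_of_nonneg_left h2 (Real.exp_pos _).le
    _ = l ^ η * Real.exp (-(l * s)) * (t - s) ^ η := by
        rw [Real.mul_rpow hl.le hts]; ring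
    _ ≤ (η / (Real.exp 1 * s)) ^ η * (t - s) ^ η :=
        mul_le_mul_of_nonneg_right (aux_sup η s l hη0 hs hl) (Real.rpow_nonneg hts _)
    _ = ((η / Real.exp 1) / s * (t - s)) ^ η := by
        rw [← Real.mul_rpow (by positivity) hts, div_div]



/-- Hölder-in-time smoothing of a diagonal semigroup on `ℓ²`: for `λ_k > 0`,
`η ∈ (0,1]`, `0 < s₀ ≤ t₀` and any square-summable sequence `(x_k)`,
`Σ_k (exp(-λ_k s₀) - exp(-λ_k t₀))² x_k² ≤ (η/e)^{2η} s₀^{-2η} (t₀-s₀)^{2η} Σ_k x_k²`. -/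
theorem diagonal_semigroup_holder_smoothing (lam : ℕ → ℝ)
    (hlam : ∀ k : ℕ, 1 ≤ k → 0 < lam k)
    (η : ℝ) (hη : η ∈ Set.Ioc (0 : ℝ) 1)
    (s₀ t₀ : ℝ) (hs₀ : 0 < s₀) (hst : s₀ ≤ t₀)
    (x : ℕ → ℝ) (hx : Summable (fun k : ℕ => x (k + 1) ^ 2)) :
    (∑' k : ℕ, (Real.exp (-lam (k + 1) * s₀) - Real.exp (-lam (k + 1) * t₀)) ^ 2 *
        x (k + 1) ^ 2)
      ≤ (η / Real.exp 1) ^ (2 * η) * s₀ ^ (-(2 * η)) * (t₀ - s₀) ^ (2 * η) *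
          ∑' k : ℕ, x (k + 1) ^ 2 := by
  obtain ⟨hη0, hη1⟩ := hη
  have hts : 0 ≤ t₀ - s₀ := sub_nonneg.2 hst
  set A : ℝ := (η / Real.exp 1) / s₀ * (t₀ - s₀) with hAdef
  have hA : 0 ≤ A := by positivity
  set C : ℝ := (η / Real.exp 1) ^ (2 * η) * s₀ ^ (-(2 * η)) * (t₀ - s₀) ^ (2 * η) with hCdef
  have hCA : C = A ^ (2 * η) := by
    rw [hCdef, hAdef, div_eq_mul_inv (η / Real.exp 1) s₀,
      Real.mul_rpow (by positivity) hts, Real.mul_rpow (by positivity) (by positivity),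
      Real.inv_rpow hs₀.le, ← Real.rpow_neg hs₀.le]
  have hC : 0 ≤ C := by rw [hCA]; positivity
  have hpt : ∀ k : ℕ,
      (Real.exp (-lam (k + 1) * s₀) - Real.exp (-lam (k + 1) * t₀)) ^ 2 * x (k + 1) ^ 2
        ≤ C * x (k + 1) ^ 2 := by
    intro k
    have hl := hlam (k + 1) (Nat.le_add_left 1 k)
    have hd0 : 0 ≤ Real.exp (-lam (k + 1) * s₀) - Real.exp (-lam (k + 1) * t₀) := by
      have : -lam (k + 1) * t₀ ≤ -lam (k + 1) * s₀ := by nlinarith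
      have := Real.exp_le_exp.2 this
      linarith
    have hd := aux_diff η s₀ t₀ (lam (k + 1)) hη0 hη1 hs₀ hst hl
    have hsq : (Real.exp (-lam (k + 1) * s₀) - Real.exp (-lam (k + 1) * t₀)) ^ 2
        ≤ (A ^ η) ^ 2 := pow_le_pow_left₀ hd0 hd 2
    have hA2 : (A ^ η) ^ 2 = A ^ (2 * η) := by
      rw [← Real.rpow_natCast (A ^ η) 2, ← Real.rpow_mul hA]
      norm_num [mul_comm]
    have : (Real.exp (-lam (k + 1) * s₀) - Real.exp (-lam (k + 1) * t₀)) ^ 2 ≤ C := by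
      rw [hCA, ← hA2]; exact hsq
    exact mul_le_mul_of_nonneg_right this (sq_nonneg _)
  have hsum2 : Summable (fun k : ℕ => C * x (k + 1) ^ 2) := hx.mul_left C
  have hsum1 : Summable (fun k : ℕ =>
      (Real.exp (-lam (k + 1) * s₀) - Real.exp (-lam (k + 1) * t₀)) ^ 2 * x (k + 1) ^ 2) :=
    Summable.of_nonneg_of_le (fun k => by positivity) hpt hsum2
  calc (∑' k : ℕ, (Real.exp (-lam (k + 1) * s₀) - Real.exp (-lam (k + 1) * t₀)) ^ 2 *
        x (k + 1) ^ 2)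
      ≤ ∑' k : ℕ, C * x (k + 1) ^ 2 := Summable.tsum_le_tsum hpt hsum1 hsum2
    _ = C * ∑' k : ℕ, x (k + 1) ^ 2 := tsum_mul_left
end

section
/- (L^q consistency estimate for the modified nonlinearity, the core of the order-one estimate in Proposition 3.1.) Let (O, μ) be a measure space with μ(O) < ∞, let q ∈ [1, ∞), and let δt₀ ∈ (0,1). There exists a constant C = C(δt₀, q, μ(O)) ∈ (0,∞) such that for every δt ∈ [0, δt₀] and every measurable function u : O → ℝ with finite L^{5q}(μ) norm, ‖Ψ_{δt}∘u − F∘u‖_{L^q(μ)} ≤ C·δt·(1 + ‖u‖_{L^{5q}(μ)}⁵). -/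
open MeasureTheory
open scoped ENNReal NNReal

lemma exp_neg_le_quad (x : ℝ) (hx : 0 ≤ x) : Real.exp (-x) ≤ 1 - x + x ^ 2 := by
  have h1 : 1 + x ≤ Real.exp x := by
    have := Real.add_one_le_exp x; linarith
  have h2 : Real.exp (-x) * Real.exp x = 1 := by
    rw [← Real.exp_add]; simp
  have h3 : 0 < Real.exp (-x) := Real.exp_pos _
  nlinarith [sq_nonneg x, mul_pos h3 (Real.exp_pos x)]

lemma pow_le_one_add_pow5 (w : ℝ) (hw : 0 ≤ w) (k : ℕ) (hk : k ≤ 5) :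
    w ^ k ≤ 1 + w ^ 5 := by
  rcases le_total w 1 with h | h
  · have h2 : w ^ k ≤ 1 := pow_le_one₀ hw h
    have h3 : (0:ℝ) ≤ w ^ 5 := by positivity
    linarith
  · have h2 : w ^ k ≤ w ^ 5 := pow_le_pow_right₀ h hk
    linarith

set_option maxHeartbeats 1600000 in
lemma phi_taylor (t : ℝ) (ht0 : 0 < t) (ht1 : t ≤ 1) (z : ℝ) :
    |Phi t z - z - t * F z| ≤ 64 * t ^ 2 * (1 + |z| ^ 5) := by
  set s := z ^ 2 with hs
  have hs0 : 0 ≤ s := sq_nonneg z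
  set a := Real.exp (-2 * t) with ha
  have ha0 : 0 < a := Real.exp_pos _
  have ha1 : a ≤ 1 := Real.exp_le_one_iff.mpr (by linarith)
  have halow : 1 - 2 * t ≤ a := by
    have := Real.add_one_le_exp (-2 * t); linarith
  have hahigh : a ≤ 1 - 2 * t + 4 * t ^ 2 := by
    have := exp_neg_le_quad (2 * t) (by linarith)
    have e : (-(2*t)) = -2 * t := by ring
    rw [e] at this
    nlinarith
  have haexp : Real.exp (-2) ≤ a := Real.exp_le_exp.mpr (by linarith)
  set D := z ^ 2 + (1 - z ^ 2) * a with hD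
  have hDgea : a ≤ D := by nlinarith
  have hDpos : 0 < D := lt_of_lt_of_le ha0 hDgea
  set r := Real.sqrt D with hr
  have hr0 : 0 < r := Real.sqrt_pos.mpr hDpos
  have hr2 : r ^ 2 = D := Real.sq_sqrt hDpos.le
  have hrge : (1:ℝ)/3 ≤ r := by
    have h1 : Real.exp (-1) ^ 2 = Real.exp (-2) := by
      rw [← Real.exp_nat_mul]; norm_num
    have h2 : Real.sqrt (Real.exp (-2)) = Real.exp (-1) := by
      rw [← h1, Real.sqrt_sq (Real.exp_pos _).le]
    have h3 : Real.sqrt (Real.exp (-2)) ≤ r := Real.sqrt_le_sqrt (le_trans haexp hDgea |>.trans_eq rfl)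
    have h4 : (1:ℝ)/3 ≤ Real.exp (-1) := by
      rw [Real.exp_neg]
      rw [div_le_iff₀ (by norm_num)]
      rw [inv_mul_eq_div, le_div_iff₀ (Real.exp_pos _)]
      have := Real.exp_one_lt_d9
      linarith
    calc (1:ℝ)/3 ≤ Real.exp (-1) := h4
      _ = Real.sqrt (Real.exp (-2)) := h2.symm
      _ ≤ r := h3
  have hphi : Phi t z = z / r := rfl
  clear_value s a D r
  have hrne : r ≠ 0 := hr0.ne'
  have h1r : (1:ℝ) + r ≠ 0 := by positivity
  have heps : (1 - s) * (1 - a) = 1 - r ^ 2 := by rw [hr2, hD, hs]; ring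
  have hepsabs : |(1 - s) * (1 - a)| ≤ (1 + s) * (2 * t) := by
    rw [abs_mul]
    have h1 : |1 - s| ≤ 1 + s := by rw [abs_le]; constructor <;> linarith
    have h2 : |1 - a| ≤ 2 * t := by rw [abs_le]; constructor <;> linarith
    exact mul_le_mul h1 h2 (abs_nonneg _) (by linarith)
  have hid : 1 / r - 1 = (1 - r ^ 2) ^ 2 * (2 + r) / (2 * r * (1 + r) ^ 2) + (1 - r ^ 2) / 2 := by
    field_simp
    ring
  have hEeq : 1 / r - 1 - t * (1 - s) =
      (1 - r ^ 2) ^ 2 * (2 + r) / (2 * r * (1 + r) ^ 2) + (1 - s) * ((1 - a) - 2 * t) / 2 := by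
    rw [show 1 / r - 1 - t * (1 - s) = (1 / r - 1) - t * (1 - s) from by ring, hid, ← heps]
    ring
  have hT1 : |(1 - r ^ 2) ^ 2 * (2 + r) / (2 * r * (1 + r) ^ 2)| ≤ 14 * t ^ 2 * (1 + s) ^ 2 := by
    rw [abs_of_nonneg (by positivity)]
    rw [div_le_iff₀ (by positivity)]
    have hsq : (1 - r ^ 2) ^ 2 ≤ ((1 + s) * (2 * t)) ^ 2 := by
      rw [← heps]
      calc ((1-s)*(1-a))^2 = |(1-s)*(1-a)|^2 := (sq_abs _).symm
        _ ≤ ((1 + s) * (2 * t)) ^ 2 := by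
            apply pow_le_pow_left₀ (abs_nonneg _) hepsabs
    have hfac : 2 + r ≤ 7 * r * (1 + r) ^ 2 := by nlinarith
    calc (1 - r ^ 2) ^ 2 * (2 + r) ≤ ((1 + s) * (2 * t)) ^ 2 * (7 * r * (1 + r) ^ 2) := by
          apply mul_le_mul hsq hfac (by linarith) (by positivity)
      _ = 14 * t ^ 2 * (1 + s) ^ 2 * (2 * r * (1 + r) ^ 2) := by ring
  have hT2 : |(1 - s) * ((1 - a) - 2 * t) / 2| ≤ 2 * t ^ 2 * (1 + s) := by
    rw [abs_div, abs_mul]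
    have h1 : |1 - s| ≤ 1 + s := by rw [abs_le]; constructor <;> linarith
    have h2 : |(1 - a) - 2 * t| ≤ 4 * t ^ 2 := by
      rw [abs_le]; constructor <;> nlinarith
    have h3 : |(2:ℝ)| = 2 := by norm_num
    rw [h3, div_le_iff₀ (by norm_num)]
    calc |1-s| * |(1-a) - 2*t| ≤ (1 + s) * (4 * t ^ 2) := by
          apply mul_le_mul h1 h2 (abs_nonneg _) (by linarith)
      _ = 2 * t ^ 2 * (1 + s) * 2 := by ring
  have hE : |1 / r - 1 - t * (1 - s)| ≤ 16 * t ^ 2 * (1 + s) ^ 2 := by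
    rw [hEeq]
    have habs := abs_add_le ((1 - r ^ 2) ^ 2 * (2 + r) / (2 * r * (1 + r) ^ 2))
      ((1 - s) * ((1 - a) - 2 * t) / 2)
    have hss : (1 + s) ≤ (1 + s) ^ 2 := by nlinarith
    have hss2 := mul_le_mul_of_nonneg_left hss (by positivity : (0:ℝ) ≤ 2 * t ^ 2)
    linarith
  have hmain : Phi t z - z - t * F z = z * (1 / r - 1 - t * (1 - s)) := by
    rw [hphi, F, hs]; ring
  rw [hmain, abs_mul]
  have hw := abs_nonneg z
  set w := |z| with hwdef
  have hsw : s = w ^ 2 := hs.trans (sq_abs z).symm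
  calc w * |1 / r - 1 - t * (1 - s)| ≤ w * (16 * t ^ 2 * (1 + s) ^ 2) := by
        apply mul_le_mul_of_nonneg_left hE hw
    _ = 16 * t ^ 2 * (w + 2 * w ^ 3 + w ^ 5) := by rw [hsw]; ring
    _ ≤ 64 * t ^ 2 * (1 + w ^ 5) := by
        have k1 := pow_le_one_add_pow5 w hw 1 (by norm_num)
        have k3 := pow_le_one_add_pow5 w hw 3 (by norm_num)
        rw [pow_one] at k1
        have hsum : w + 2 * w ^ 3 + w ^ 5 ≤ 4 * (1 + w ^ 5) := by linarith
        have := mul_le_mul_of_nonneg_left hsum (by positivity : (0:ℝ) ≤ 16 * t ^ 2)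
        linarith

lemma psi_ptwise (δt : ℝ) (h0 : 0 ≤ δt) (h1 : δt ≤ 1) (z : ℝ) :
    |Psi δt z - F z| ≤ 64 * δt * (1 + |z| ^ 5) := by
  rcases eq_or_lt_of_le h0 with h | h
  · simp [Psi, ← h]
  · have hne : δt ≠ 0 := ne_of_gt h
    have key := phi_taylor δt h h1 z
    rw [Psi, if_neg hne]
    have e : (Phi δt z - z) / δt - F z = (Phi δt z - z - δt * F z) / δt := by
      field_simp
    rw [e, abs_div, abs_of_pos h, div_le_iff₀ h]
    calc |Phi δt z - z - δt * F z| ≤ 64 * δt ^ 2 * (1 + |z| ^ 5) := key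
      _ = 64 * δt * (1 + |z| ^ 5) * δt := by ring


set_option maxHeartbeats 800000 in
set_option synthInstance.maxHeartbeats 400000 in
/-- `L^q` consistency estimate for the modified nonlinearity (core of the order-one
estimate in Proposition 3.1): on a finite measure space, for `q ∈ [1,∞)` and
`δt₀ ∈ (0,1)` there is `C = C(δt₀, q, μ(O)) > 0` such that for every `δt ∈ [0, δt₀]`
and every measurable `u` with finite `L^{5q}` norm,
`‖Ψ_{δt}∘u - F∘u‖_{L^q} ≤ C δt (1 + ‖u‖_{L^{5q}}⁵)`. -/
theorem psi_Lq_consistency {O : Type*} [MeasurableSpace O] (μ : Measure O)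
    [IsFiniteMeasure μ] (q : ℝ) (hq : 1 ≤ q) (δt₀ : ℝ) (h₀ : δt₀ ∈ Set.Ioo (0 : ℝ) 1) :
    ∃ C : ℝ, 0 < C ∧ ∀ δt ∈ Set.Icc (0 : ℝ) δt₀, ∀ u : O → ℝ,
      Measurable u →
      eLpNorm u (ENNReal.ofReal (5 * q)) μ < ⊤ →
      eLpNorm (fun x => Psi δt (u x) - F (u x)) (ENNReal.ofReal q) μ
        ≤ ENNReal.ofReal (C * δt) *
            (1 + eLpNorm u (ENNReal.ofReal (5 * q)) μ ^ 5) := by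
  obtain ⟨hδ0, hδ1⟩ := h₀
  have hq0 : (0:ℝ) < q := lt_of_lt_of_le one_pos hq
  set p : ℝ≥0∞ := ENNReal.ofReal q with hp
  set p5 : ℝ≥0∞ := ENNReal.ofReal (5 * q) with hp5
  set M : ℝ≥0∞ := μ Set.univ ^ (1 / q) with hM
  have hMne : M ≠ ⊤ := ENNReal.rpow_ne_top_of_nonneg (by positivity) (measure_ne_top μ _)
  set K : ℝ := max 1 M.toReal with hK
  have hK1 : (1:ℝ) ≤ K := le_max_left _ _
  refine ⟨64 * K, by positivity, ?_⟩
  rintro δt ⟨hdt0, hdt1⟩ u hu hu5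
  by_cases hμ : μ = 0
  · simp only [hμ, eLpNorm_measure_zero]
    exact zero_le
  set X : ℝ≥0∞ := eLpNorm u p5 μ with hX
  have hpt : ∀ x, ‖Psi δt (u x) - F (u x)‖ ≤ 64 * δt * (1 + |u x| ^ 5) := fun x => by
    simpa [Real.norm_eq_abs] using psi_ptwise δt hdt0 (le_trans hdt1 hδ1.le) (u x)
  have h1 : eLpNorm (fun x => Psi δt (u x) - F (u x)) p μ
      ≤ eLpNorm (fun x => 64 * δt * (1 + |u x| ^ 5)) p μ := eLpNorm_mono_real hpt
  have h2 : eLpNorm (fun x => 64 * δt * (1 + |u x| ^ 5)) p μ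
      = ENNReal.ofReal (64 * δt) * eLpNorm (fun x => 1 + |u x| ^ 5) p μ := by
    have hsmul := eLpNorm_const_smul (64 * δt : ℝ) (fun x : O => 1 + |u x| ^ 5) p μ
    simp only [Pi.smul_def, smul_eq_mul] at hsmul
    rw [hsmul, Real.enorm_eq_ofReal (by positivity)]
  have hmeas5 : AEStronglyMeasurable (fun x => |u x| ^ 5) μ :=
    ((hu.abs.pow measurable_const)).aestronglyMeasurable
  have h3 : eLpNorm (fun x => 1 + |u x| ^ 5) p μ
      ≤ eLpNorm (fun _ : O => (1:ℝ)) p μ + eLpNorm (fun x => |u x| ^ 5) p μ :=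
    eLpNorm_add_le aestronglyMeasurable_const hmeas5 (ENNReal.one_le_ofReal.mpr hq)
  have h4 : eLpNorm (fun _ : O => (1:ℝ)) p μ = M := by
    rw [eLpNorm_const (1:ℝ) (by simp [hp]; positivity) hμ]
    simp [hp, ENNReal.toReal_ofReal hq0.le, hM]
  have h5 : eLpNorm (fun x => |u x| ^ 5) p μ = X ^ 5 := by
    have e1 : (fun x => |u x| ^ 5) = fun x => ‖u x‖ ^ (5:ℝ) := by
      funext x; rw [Real.norm_eq_abs, ← Real.rpow_natCast (|u x|) 5]; norm_num
    rw [e1, eLpNorm_norm_rpow u (by norm_num : (0:ℝ) < 5)]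
    have e2 : p * ENNReal.ofReal 5 = p5 := by
      rw [hp, hp5, ← ENNReal.ofReal_mul hq0.le, mul_comm]
    rw [e2, hX, ← ENNReal.rpow_natCast (eLpNorm u p5 μ) 5]; norm_num
  have hKM : M ≤ ENNReal.ofReal K := by
    rw [← ENNReal.ofReal_toReal hMne]
    exact ENNReal.ofReal_le_ofReal (le_max_right _ _)
  have hKone : (1:ℝ≥0∞) ≤ ENNReal.ofReal K := by
    rw [show (1:ℝ≥0∞) = ENNReal.ofReal 1 from (ENNReal.ofReal_one).symm]
    exact ENNReal.ofReal_le_ofReal hK1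
  have hMX : M + X ^ 5 ≤ ENNReal.ofReal K * (1 + X ^ 5) := by
    rw [mul_add, mul_one]
    exact add_le_add hKM (le_mul_of_one_le_left zero_le hKone)
  calc eLpNorm (fun x => Psi δt (u x) - F (u x)) p μ
      ≤ ENNReal.ofReal (64 * δt) * eLpNorm (fun x => 1 + |u x| ^ 5) p μ := by
        rw [← h2]; exact h1
    _ ≤ ENNReal.ofReal (64 * δt) * (M + X ^ 5) := by
        apply mul_le_mul_right ; rw [← h4, ← h5]; exact h3
    _ ≤ ENNReal.ofReal (64 * δt) * (ENNReal.ofReal K * (1 + X ^ 5)) :=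
        mul_le_mul_right hMX _
    _ = ENNReal.ofReal (64 * K * δt) * (1 + X ^ 5) := by
        rw [← mul_assoc, ← ENNReal.ofReal_mul (by positivity)]
        ring_nf
end

section
/- (L^q increment bound for the splitting flow map, used in the a priori estimate of Lemma 3.1.) Let (O, μ) be a measure space with μ(O) < ∞, let q ∈ [1, ∞). There exists a constant C = C(q, μ(O)) ∈ (0,∞) such that for every δt ≥ 0 and every measurable function u : O → ℝ with finite L^{3q}(μ) norm, ‖Φ_{δt}∘u − u‖_{L^q(μ)} ≤ C·δt·(1 + ‖u‖_{L^{3q}(μ)}³). -/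
open MeasureTheory

lemma phi_pointwise (t z : ℝ) (ht : 0 ≤ t) : |Phi t z - z| ≤ 4 * t * (1 + |z| ^ 3) := by
  set e := Real.exp (-2 * t) with he
  have he0 : 0 < e := Real.exp_pos _
  have he1 : e ≤ 1 := Real.exp_le_one_iff.mpr (by linarith)
  have het : 1 - e ≤ 2 * t := by
    have := Real.add_one_le_exp (-2 * t)
    linarith
  set D := z ^ 2 + (1 - z ^ 2) * e with hD
  have hDpos : 0 < D := by nlinarith [sq_nonneg z]
  have hs0 : 0 < Real.sqrt D := Real.sqrt_pos.mpr hDpos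
  have hsq : Real.sqrt D ^ 2 = D := Real.sq_sqrt hDpos.le
  have key : Phi t z - z = z * (1 - D) / (Real.sqrt D * (1 + Real.sqrt D)) := by
    rw [Phi, ← hD]
    field_simp
    linear_combination (-z) * hsq + (-z) * hD
  have hden : 0 < Real.sqrt D * (1 + Real.sqrt D) := by positivity
  rw [key, abs_div, abs_of_pos hden, div_le_iff₀ hden, abs_mul]
  have hc : (0:ℝ) ≤ |z| ^ 3 := by positivity
  rcases le_total (z ^ 2) 1 with hz | hz
  · have h1 : |z| ≤ Real.sqrt D := by
      rw [show |z| = Real.sqrt (z ^ 2) by rw [Real.sqrt_sq_eq_abs]]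
      exact Real.sqrt_le_sqrt (by nlinarith)
    have h2' : 1 - D = (1 - z ^ 2) * (1 - e) := by rw [hD]; ring
    have h2 : |1 - D| = (1 - z ^ 2) * (1 - e) := by
      rw [h2', abs_of_nonneg (mul_nonneg (by linarith) (by linarith))]
    rw [h2]
    calc |z| * ((1 - z ^ 2) * (1 - e)) ≤ |z| * (2 * t) := by
          have hstep : (1 - z ^ 2) * (1 - e) ≤ 1 - e := by nlinarith
          have := mul_le_mul_of_nonneg_left hstep (abs_nonneg z)
          have := mul_le_mul_of_nonneg_left het (abs_nonneg z)
          linarith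
      _ ≤ 2 * t * Real.sqrt D := by nlinarith
      _ ≤ 4 * t * (1 + |z| ^ 3) * (Real.sqrt D * (1 + Real.sqrt D)) := by
          nlinarith [mul_nonneg (mul_nonneg ht hs0.le) hc,
            mul_nonneg (mul_nonneg (mul_nonneg ht hs0.le) hc) hs0.le,
            mul_nonneg (mul_nonneg ht hs0.le) hs0.le,
            mul_nonneg ht hs0.le]
  · have hD1 : 1 ≤ D := by nlinarith
    have h1 : (1:ℝ) ≤ Real.sqrt D := by
      rw [show (1:ℝ) = Real.sqrt 1 by simp]
      exact Real.sqrt_le_sqrt hD1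
    have h2' : 1 - D = -((z ^ 2 - 1) * (1 - e)) := by rw [hD]; ring
    have h2 : |1 - D| = (z ^ 2 - 1) * (1 - e) := by
      rw [h2', abs_neg, abs_of_nonneg (mul_nonneg (by linarith) (by linarith))]
    rw [h2]
    have ha : 1 ≤ |z| := by nlinarith [sq_abs z, abs_nonneg z]
    have hz3 : |z| ^ 3 = |z| * z ^ 2 := by
      rw [← sq_abs]; ring
    have hss : (2:ℝ) ≤ Real.sqrt D * (1 + Real.sqrt D) := by nlinarith
    calc |z| * ((z ^ 2 - 1) * (1 - e)) ≤ 2 * t * |z| ^ 3 := by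
          nlinarith [mul_le_mul_of_nonneg_left het
            (mul_nonneg (abs_nonneg z) (by nlinarith : (0:ℝ) ≤ z ^ 2 - 1)),
            mul_nonneg ht (abs_nonneg z), hz3]
      _ ≤ 4 * t * (1 + |z| ^ 3) * (Real.sqrt D * (1 + Real.sqrt D)) := by
          nlinarith [mul_le_mul_of_nonneg_left hss
            (by positivity : (0:ℝ) ≤ 4 * t * (1 + |z| ^ 3)),
            mul_nonneg ht hc]


/-- `L^q` increment bound for the splitting flow map (used in the a priori estimate of
Lemma 3.1): on a finite measure space, for `q ∈ [1,∞)` there is `C = C(q, μ(O)) > 0`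
such that for every `δt ≥ 0` and every measurable `u` with finite `L^{3q}` norm,
`‖Φ_{δt}∘u - u‖_{L^q} ≤ C δt (1 + ‖u‖_{L^{3q}}³)`. -/
theorem phi_Lq_increment_bound {O : Type*} [MeasurableSpace O] (μ : Measure O)
    [IsFiniteMeasure μ] (q : ℝ) (hq : 1 ≤ q) :
    ∃ C : ℝ, 0 < C ∧ ∀ δt : ℝ, 0 ≤ δt → ∀ u : O → ℝ,
      Measurable u →
      eLpNorm u (ENNReal.ofReal (3 * q)) μ < ⊤ →
      eLpNorm (fun x => Phi δt (u x) - u x) (ENNReal.ofReal q) μ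
        ≤ ENNReal.ofReal (C * δt) *
            (1 + eLpNorm u (ENNReal.ofReal (3 * q)) μ ^ 3) := by
  set p := ENNReal.ofReal q with hp
  have hp1 : 1 ≤ p := ENNReal.one_le_ofReal.mpr hq
  set A := eLpNorm (fun _ : O => (1 : ℝ)) p μ with hA
  have hAtop : A ≠ ⊤ := (memLp_const (1 : ℝ)).2.ne
  set c0 : ℝ := max 1 A.toReal with hc0
  have hc01 : (1 : ℝ) ≤ c0 := le_max_left _ _
  refine ⟨4 * c0, by positivity, fun δt hδt u hu _ => ?_⟩
  set N := eLpNorm u (ENNReal.ofReal (3 * q)) μ with hN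
  have hAle : A ≤ ENNReal.ofReal c0 := by
    rw [← ENNReal.ofReal_toReal hAtop]
    exact ENNReal.ofReal_le_ofReal (le_max_right _ _)
  -- step 1 : pointwise domination
  have h1 : eLpNorm (fun x => Phi δt (u x) - u x) p μ
      ≤ eLpNorm (fun x => (4 * δt) * (1 + |u x| ^ 3)) p μ := by
    refine eLpNorm_mono fun x => ?_
    rw [Real.norm_eq_abs, Real.norm_eq_abs,
      abs_of_nonneg (by positivity : (0:ℝ) ≤ (4 * δt) * (1 + |u x| ^ 3))]
    exact phi_pointwise δt (u x) hδt
  -- step 2 : pull out the constant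
  have h2 : eLpNorm (fun x => (4 * δt) * (1 + |u x| ^ 3)) p μ
      = ENNReal.ofReal (4 * δt) * eLpNorm (fun x => 1 + |u x| ^ 3) p μ := by
    have h := eLpNorm_const_smul (4 * δt) (fun x : O => 1 + |u x| ^ 3) p μ
    simp only [Pi.smul_def, smul_eq_mul] at h
    rw [h]
    congr 1
    rw [← ofReal_norm, Real.norm_eq_abs,
      abs_of_nonneg (by positivity : (0:ℝ) ≤ 4 * δt)]
  -- step 3 : triangle inequality
  have hmeas3 : AEStronglyMeasurable (fun x => |u x| ^ 3) μ :=
    ((hu.abs.pow_const 3)).aestronglyMeasurable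
  have h3 : eLpNorm (fun x => 1 + |u x| ^ 3) p μ
      ≤ A + eLpNorm (fun x => |u x| ^ 3) p μ :=
    eLpNorm_add_le aestronglyMeasurable_const hmeas3 hp1
  -- step 4 : the cube
  have h4 : eLpNorm (fun x => |u x| ^ 3) p μ = N ^ 3 := by
    have h := eLpNorm_norm_rpow u (p := p) (μ := μ) (q := 3) (by norm_num)
    have hfun : (fun x => |u x| ^ 3) = fun x => ‖u x‖ ^ (3:ℝ) := by
      funext x
      rw [Real.norm_eq_abs, ← Real.rpow_natCast |u x| 3]
      norm_num
    rw [hfun, h, show p * ENNReal.ofReal 3 = ENNReal.ofReal (3 * q) by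
      rw [hp, ← ENNReal.ofReal_mul (by linarith), mul_comm], ← hN,
      show ((3:ℝ)) = ((3:ℕ):ℝ) by norm_num, ENNReal.rpow_natCast]
  -- combine
  have hmain : A + N ^ 3 ≤ ENNReal.ofReal c0 * (1 + N ^ 3) := by
    rw [mul_add, mul_one]
    refine add_le_add hAle ?_
    conv_lhs => rw [← one_mul (N ^ 3)]
    exact mul_le_mul_left (by
      rw [show (1:ENNReal) = ENNReal.ofReal 1 by simp]
      exact ENNReal.ofReal_le_ofReal hc01) _
  calc eLpNorm (fun x => Phi δt (u x) - u x) p μ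
      ≤ ENNReal.ofReal (4 * δt) * (A + N ^ 3) := by
        rw [← h4]; exact h1.trans (by rw [h2]; exact mul_le_mul_right h3 _)
    _ ≤ ENNReal.ofReal (4 * δt) * (ENNReal.ofReal c0 * (1 + N ^ 3)) :=
        mul_le_mul_right hmain _
    _ = ENNReal.ofReal (4 * c0 * δt) * (1 + N ^ 3) := by
        rw [← mul_assoc, ← ENNReal.ofReal_mul (by positivity)]
        ring_nf
end
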